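/- arXiv:2409.19340 — 6 statements merged into one kernel-verified Lean document; each statement's English description precedes it below -/
import Mathlib

section
/- Let $\{X_{k,n}: 1\le k\le n,\ n\ge 1\}$ be an array of random variables such that for each $n$, $X_{1,n},\dots,X_{n,n}$ are independent and identically distributed with $\mathbb{P}(X_{1,n}=i)=p_n(i)$ for $1\le i\le K(n)$. If $K(n)=o(\sqrt{n}\,\sigma_n)$, then $\frac{\sqrt{n}}{\sigma_n}\sum_{i=1}^{K(n)}\hat p_n(i)\ln\frac{\hat p_n(i)}{p_n(i)}$ converges to $0$ in probability as $n\to\infty$. -/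
open MeasureTheory ProbabilityTheory Filter


private lemma term_lb {q pr : ℝ} (hq : 0 ≤ q) (hp : 0 < pr) :
    q - pr ≤ q * Real.log (q / pr) := by
  rcases eq_or_lt_of_le hq with h | h
  · simp [← h]; linarith
  · have hx : 0 < q / pr := div_pos h hp
    have h1 := Real.one_sub_inv_le_log_of_pos hx
    have h2 : q * (1 - (q / pr)⁻¹) ≤ q * Real.log (q / pr) :=
      mul_le_mul_of_nonneg_left h1 hq
    calc q - pr = q * (1 - (q / pr)⁻¹) := by field_simp
      _ ≤ _ := h2

private lemma term_ub {q pr : ℝ} (hq : 0 ≤ q) (hp : 0 < pr) :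
    q * Real.log (q / pr) ≤ q ^ 2 / pr - q := by
  rcases eq_or_lt_of_le hq with h | h
  · simp [← h]
  · have hx : 0 < q / pr := div_pos h hp
    calc q * Real.log (q / pr) ≤ q * (q / pr - 1) :=
        mul_le_mul_of_nonneg_left (Real.log_le_sub_one_of_pos hx) hq
      _ = q ^ 2 / pr - q := by ring

/-- The empirical distribution `p̂ n(i)(ω) = (1/n) ∑_{j=1}^n 1_{X_{j,n}(ω) = i}` of the array
`X k n` (`k`-th variable in the `n`-th row). -/
noncomputable def empProb {Ω : Type*} (X : ℕ → ℕ → Ω → ℕ) (n i : ℕ) (ω : Ω) : ℝ :=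
  (∑ j ∈ Finset.Icc 1 n, if X j n ω = i then (1 : ℝ) else 0) / n

private lemma emp_sq_integral_le {Ω : Type*} [MeasurableSpace Ω] (μ : Measure Ω) [IsProbabilityMeasure μ]
    (X : ℕ → ℕ → Ω → ℕ) (p : ℕ → ℕ → ℝ) (K : ℕ → ℕ) (n : ℕ) (hn : n ≥ 1)
    (hmeas : ∀ k n, Measurable (X k n))
    (hpos : ∀ n ≥ 1, ∀ i ∈ Finset.Icc 1 (K n), 0 < p n i)
    (hsum : ∀ n ≥ 1, ∑ i ∈ Finset.Icc 1 (K n), p n i = 1)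
    (hdist : ∀ n ≥ 1, ∀ k ∈ Finset.Icc 1 n, ∀ i ∈ Finset.Icc 1 (K n),
      μ {ω | X k n ω = i} = ENNReal.ofReal (p n i))
    (hindep : ∀ n ≥ 1, iIndepFun
      (fun k : Fin n => X (k.1 + 1) n) μ)
    (i : ℕ) (hi : i ∈ Finset.Icc 1 (K n)) :
    ∫ ω, (empProb X n i ω) ^ 2 ∂μ ≤ p n i / n + (p n i) ^ 2 := by
  simp only [empProb]
  have hn0 : (0:ℝ) < n := by exact_mod_cast hn
  have hpi : 0 < p n i := hpos n hn i hi
  have hpile : p n i ≤ 1 := by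
    rw [← hsum n hn]
    exact Finset.single_le_sum (fun j hj => (hpos n hn j hj).le) hi
  set A : ℕ → Set Ω := fun j => X j n ⁻¹' {i} with hA
  have hAmeas : ∀ j, MeasurableSet (A j) := fun j => (hmeas j n) (measurableSet_singleton i)
  -- measure of single event
  have hAsingle : ∀ j ∈ Finset.Icc 1 n, μ (A j) = ENNReal.ofReal (p n i) := by
    intro j hj
    have : A j = {ω | X j n ω = i} := rfl
    rw [this]
    exact hdist n hn j hj i hi
  -- measure of pairwise intersections
  have hApair : ∀ j ∈ Finset.Icc 1 n, ∀ k ∈ Finset.Icc 1 n, j ≠ k →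
      μ (A j ∩ A k) = ENNReal.ofReal (p n i) * ENNReal.ofReal (p n i) := by
    intro j hj k hk hjk
    rw [Finset.mem_Icc] at hj hk
    have hj' : j - 1 < n := by omega
    have hk' : k - 1 < n := by omega
    have hne : (⟨j - 1, hj'⟩ : Fin n) ≠ ⟨k - 1, hk'⟩ := by
      simp only [ne_eq, Fin.mk.injEq]
      omega
    have hind := (hindep n hn).indepFun hne
    simp only at hind
    have hje : j - 1 + 1 = j := by omega
    have hke : k - 1 + 1 = k := by omega
    rw [hje, hke] at hind
    have := hind.measure_inter_preimage_eq_mul {i} {i}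
      (measurableSet_singleton i) (measurableSet_singleton i)
    rw [hA]
    rw [this]
    have e1 : X j n ⁻¹' {i} = {ω | X j n ω = i} := rfl
    have e2 : X k n ⁻¹' {i} = {ω | X k n ω = i} := rfl
    rw [e1, e2, hdist n hn j (by rw [Finset.mem_Icc]; omega) i hi,
      hdist n hn k (by rw [Finset.mem_Icc]; omega) i hi]
  -- rewrite integrand as double sum of indicators
  have hrepr : ∀ ω, ((∑ j ∈ Finset.Icc 1 n, if X j n ω = i then (1 : ℝ) else 0) / n) ^ 2
      = (∑ j ∈ Finset.Icc 1 n, ∑ k ∈ Finset.Icc 1 n,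
          Set.indicator (A j ∩ A k) (fun _ => (1:ℝ)) ω) / ((n : ℝ) * n) := by
    intro ω
    have hprod : ∀ j k, (if X j n ω = i then (1:ℝ) else 0) * (if X k n ω = i then (1:ℝ) else 0)
        = Set.indicator (A j ∩ A k) (fun _ => (1:ℝ)) ω := by
      intro j k
      by_cases h1 : X j n ω = i <;> by_cases h2 : X k n ω = i <;>
        simp [Set.indicator_apply, Set.mem_inter_iff, Set.mem_preimage, hA, h1, h2]
    rw [div_pow, sq, Finset.sum_mul_sum]
    rw [Finset.sum_congr rfl (fun j _ => Finset.sum_congr rfl (fun k _ => hprod j k))]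
    ring_nf
  have hint_ind : ∀ j k : ℕ, Integrable (Set.indicator (A j ∩ A k) (fun _ => (1:ℝ))) μ :=
    fun j k => (integrable_const 1).indicator ((hAmeas j).inter (hAmeas k))
  calc ∫ ω, ((∑ j ∈ Finset.Icc 1 n, if X j n ω = i then (1 : ℝ) else 0) / n) ^ 2 ∂μ
      = ∫ ω, (∑ j ∈ Finset.Icc 1 n, ∑ k ∈ Finset.Icc 1 n,
          Set.indicator (A j ∩ A k) (fun _ => (1:ℝ)) ω) / ((n : ℝ) * n) ∂μ := by
        exact integral_congr_ae (Eventually.of_forall hrepr)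
    _ = (∑ j ∈ Finset.Icc 1 n, ∑ k ∈ Finset.Icc 1 n,
          (μ (A j ∩ A k)).toReal) / ((n : ℝ) * n) := by
        rw [integral_div]
        congr 1
        rw [integral_finset_sum _ (fun j _ => integrable_finset_sum _ (fun k _ => hint_ind j k))]
        refine Finset.sum_congr rfl (fun j _ => ?_)
        rw [integral_finset_sum _ (fun k _ => hint_ind j k)]
        refine Finset.sum_congr rfl (fun k _ => ?_)
        rw [integral_indicator_const (1:ℝ) ((hAmeas j).inter (hAmeas k))]
        simp
        rfl
    _ ≤ ((n : ℝ) * p n i + (n : ℝ) * (n : ℝ) * (p n i) ^ 2) / ((n : ℝ) * n) := by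
        have hmn : (0:ℝ) < (n:ℝ) * n := by positivity
        rw [div_le_div_iff₀ hmn hmn]
        apply mul_le_mul_of_nonneg_right ?_ hmn.le
        have hinner : ∀ j ∈ Finset.Icc 1 n,
            ∑ k ∈ Finset.Icc 1 n, (μ (A j ∩ A k)).toReal ≤ p n i + (n:ℝ) * (p n i)^2 := by
          intro j hj
          rw [← Finset.add_sum_erase _ _ hj]
          have h1 : (μ (A j ∩ A j)).toReal = p n i := by
            rw [Set.inter_self, hAsingle j hj, ENNReal.toReal_ofReal hpi.le]
          have h2 : ∑ k ∈ (Finset.Icc 1 n).erase j, (μ (A j ∩ A k)).toReal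
              ≤ (n:ℝ) * (p n i)^2 := by
            have heq : ∀ k ∈ (Finset.Icc 1 n).erase j,
                (μ (A j ∩ A k)).toReal = (p n i)^2 := by
              intro k hk
              rw [Finset.mem_erase] at hk
              rw [hApair j hj k hk.2 (Ne.symm hk.1), ← ENNReal.ofReal_mul hpi.le,
                ENNReal.toReal_ofReal (by positivity)]
              ring
            rw [Finset.sum_congr rfl heq, Finset.sum_const, nsmul_eq_mul]
            apply mul_le_mul_of_nonneg_right _ (by positivity)
            have hcard : ((Finset.Icc 1 n).erase j).card ≤ n := by
              calc ((Finset.Icc 1 n).erase j).card ≤ (Finset.Icc 1 n).card :=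
                    Finset.card_erase_le
                _ = n := by simp
            exact_mod_cast hcard
          rw [h1]
          linarith
        calc ∑ j ∈ Finset.Icc 1 n, ∑ k ∈ Finset.Icc 1 n, (μ (A j ∩ A k)).toReal
            ≤ ∑ j ∈ Finset.Icc 1 n, (p n i + (n:ℝ) * (p n i)^2) :=
              Finset.sum_le_sum hinner
          _ = (n:ℝ) * p n i + (n : ℝ) * (n : ℝ) * (p n i) ^ 2 := by
              rw [Finset.sum_const, nsmul_eq_mul]
              simp [Nat.card_Icc]
              ring
    _ = p n i / n + (p n i) ^ 2 := by field_simp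


/-- If `K n = o(√n σ_n)`, then `(√n/σ_n) ∑_i p̂_n(i) ln(p̂_n(i)/p_n(i))` converges to `0` in
probability (terms with `p̂_n(i) = 0` vanish, automatic since `Real.log 0 = 0` in Lean). -/

theorem kl_term_tendsto_zero_in_probability
    {Ω : Type*} [MeasurableSpace Ω] (μ : Measure Ω) [IsProbabilityMeasure μ]
    (X : ℕ → ℕ → Ω → ℕ) (p : ℕ → ℕ → ℝ) (K : ℕ → ℕ) (σ : ℕ → ℝ)
    (hmeas : ∀ k n, Measurable (X k n))
    -- each `p n` is a probability distribution on `{1, …, K n}` with positive masses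
    (hpos : ∀ n ≥ 1, ∀ i ∈ Finset.Icc 1 (K n), 0 < p n i)
    (hsum : ∀ n ≥ 1, ∑ i ∈ Finset.Icc 1 (K n), p n i = 1)
    -- `X 1 n, …, X n n` take values in the alphabet, have common distribution `p n`,
    -- and are independent
    (hrange : ∀ n ≥ 1, ∀ k ∈ Finset.Icc 1 n, ∀ ω, X k n ω ∈ Finset.Icc 1 (K n))
    (hdist : ∀ n ≥ 1, ∀ k ∈ Finset.Icc 1 n, ∀ i ∈ Finset.Icc 1 (K n),
      μ {ω | X k n ω = i} = ENNReal.ofReal (p n i))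
    (hindep : ∀ n ≥ 1, iIndepFun
      (fun k : Fin n => X (k.1 + 1) n) μ)
    -- `σ n` is the standard deviation of `ln p_n(X_{1,n})`, assumed positive
    (hσpos : ∀ n ≥ 1, 0 < σ n)
    (hσdef : ∀ n ≥ 1, σ n ^ 2
      = ∑ i ∈ Finset.Icc 1 (K n), p n i * (Real.log (p n i)) ^ 2
        - (∑ i ∈ Finset.Icc 1 (K n), p n i * Real.log (p n i)) ^ 2)
    -- the growth condition `K n = o(√n σ_n)`
    (hKo : (fun n : ℕ => (K n : ℝ)) =o[atTop] (fun n : ℕ => Real.sqrt (n : ℝ) * σ n)) :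
    ∀ ε : ℝ, 0 < ε →
      Tendsto (fun n : ℕ =>
        (μ {ω | ε < |Real.sqrt (n : ℝ) / σ n *
            ∑ i ∈ Finset.Icc 1 (K n),
              empProb X n i ω * Real.log (empProb X n i ω / p n i)|}).toReal)
        atTop (nhds 0) := by
  intro ε hε
  have key : ∀ n : ℕ, n ≥ 1 → (μ {ω | ε < |Real.sqrt (n : ℝ) / σ n *
        ∑ i ∈ Finset.Icc 1 (K n),
          empProb X n i ω * Real.log (empProb X n i ω / p n i)|}).toReal
      ≤ ε⁻¹ * ((K n : ℝ) / (Real.sqrt (n : ℝ) * σ n)) := by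
    intro n hn
    have hn0 : (0:ℝ) < n := by exact_mod_cast hn
    have hσ := hσpos n hn
    have hsq : 0 < Real.sqrt (n:ℝ) := Real.sqrt_pos.2 hn0
    -- basic facts about the empirical distribution
    have hemp_nonneg : ∀ i ω, 0 ≤ empProb X n i ω := by
      intro i ω
      simp only [empProb]
      apply div_nonneg _ hn0.le
      apply Finset.sum_nonneg; intro j _; positivity
    have hemp_le_one : ∀ i ω, empProb X n i ω ≤ 1 := by
      intro i ω
      simp only [empProb]
      rw [div_le_one hn0]
      calc (∑ j ∈ Finset.Icc 1 n, if X j n ω = i then (1:ℝ) else 0)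
          ≤ ∑ j ∈ Finset.Icc 1 n, 1 := by
            apply Finset.sum_le_sum; intro j _; split <;> norm_num
        _ = n := by simp
    have hemp_sum : ∀ ω, ∑ i ∈ Finset.Icc 1 (K n), empProb X n i ω = 1 := by
      intro ω
      simp only [empProb]
      rw [← Finset.sum_div, Finset.sum_comm]
      have h1 : ∀ j ∈ Finset.Icc 1 n,
          ∑ i ∈ Finset.Icc 1 (K n), (if X j n ω = i then (1:ℝ) else 0) = 1 := by
        intro j hj
        rw [Finset.sum_ite_eq]
        simp [hrange n hn j hj ω]
      rw [Finset.sum_congr rfl h1]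
      simp
      omega
    have hmeas_emp : ∀ i, Measurable (fun ω => empProb X n i ω) := by
      intro i
      simp only [empProb]
      apply Measurable.div_const
      apply Finset.measurable_sum
      intro j _
      exact Measurable.ite ((hmeas j n) (measurableSet_singleton i))
        measurable_const measurable_const
    -- the dominating function g
    set KL : Ω → ℝ := fun ω => ∑ i ∈ Finset.Icc 1 (K n),
      empProb X n i ω * Real.log (empProb X n i ω / p n i) with hKLdef
    set g : Ω → ℝ := fun ω =>
      ∑ i ∈ Finset.Icc 1 (K n), (empProb X n i ω) ^ 2 / p n i - 1 with hgdef
    have hKL_nonneg : ∀ ω, 0 ≤ KL ω := by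
      intro ω
      have h1 : ∑ i ∈ Finset.Icc 1 (K n), (empProb X n i ω - p n i) ≤ KL ω :=
        Finset.sum_le_sum (fun i hi => term_lb (hemp_nonneg i ω) (hpos n hn i hi))
      have h2 : ∑ i ∈ Finset.Icc 1 (K n), (empProb X n i ω - p n i) = 0 := by
        rw [Finset.sum_sub_distrib, hemp_sum ω, hsum n hn]
        ring
      linarith
    have hKL_le_g : ∀ ω, KL ω ≤ g ω := by
      intro ω
      have h1 : KL ω ≤ ∑ i ∈ Finset.Icc 1 (K n),
          ((empProb X n i ω) ^ 2 / p n i - empProb X n i ω) :=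
        Finset.sum_le_sum (fun i hi => term_ub (hemp_nonneg i ω) (hpos n hn i hi))
      have h2 : ∑ i ∈ Finset.Icc 1 (K n),
          ((empProb X n i ω) ^ 2 / p n i - empProb X n i ω) = g ω := by
        rw [Finset.sum_sub_distrib, hemp_sum ω, hgdef]
      exact le_of_le_of_eq h1 h2
    have hg_nonneg : ∀ ω, 0 ≤ g ω := fun ω => (hKL_nonneg ω).trans (hKL_le_g ω)
    have hmeas_g : Measurable g := by
      apply Measurable.sub _ measurable_const
      apply Finset.measurable_sum
      intro i _
      exact ((hmeas_emp i).pow_const 2).div_const _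
    have hg_int : Integrable g μ := by
      apply Integrable.mono' (integrable_const ((∑ i ∈ Finset.Icc 1 (K n), (p n i)⁻¹) + 1))
        hmeas_g.aestronglyMeasurable
      apply Eventually.of_forall
      intro ω
      have hC0 : 0 ≤ ∑ i ∈ Finset.Icc 1 (K n), (p n i)⁻¹ :=
        Finset.sum_nonneg (fun i hi => (inv_nonneg.2 (hpos n hn i hi).le))
      rw [Real.norm_eq_abs, abs_le]
      constructor
      · exact (neg_nonpos_of_nonneg (by linarith)).trans (hg_nonneg ω)
      · have hterm : ∀ i ∈ Finset.Icc 1 (K n),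
            (empProb X n i ω) ^ 2 / p n i ≤ (p n i)⁻¹ := by
          intro i hi
          have hp := hpos n hn i hi
          have h1 : (empProb X n i ω) ^ 2 ≤ 1 := by
            nlinarith [hemp_nonneg i ω, hemp_le_one i ω]
          rw [← one_div]
          gcongr
        have := Finset.sum_le_sum hterm
        simp only [hgdef]
        linarith
    have hint_sq : ∀ i, Integrable (fun ω => (empProb X n i ω) ^ 2) μ := by
      intro i
      apply Integrable.mono' (integrable_const 1)
        ((hmeas_emp i).pow_const 2).aestronglyMeasurable
      apply Eventually.of_forall
      intro ω
      rw [Real.norm_eq_abs, abs_of_nonneg (sq_nonneg _)]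
      nlinarith [hemp_nonneg i ω, hemp_le_one i ω]
    have hint_g : ∫ ω, g ω ∂μ ≤ (K n : ℝ) / n := by
      have hform : ∫ ω, g ω ∂μ
          = ∑ i ∈ Finset.Icc 1 (K n), (∫ ω, (empProb X n i ω) ^ 2 ∂μ) / p n i - 1 := by
        simp only [hgdef]
        rw [integral_sub (integrable_finset_sum _ (fun i _ => (hint_sq i).div_const _))
          (integrable_const 1),
          integral_finset_sum _ (fun i _ => (hint_sq i).div_const _), integral_const]
        simp [integral_div]
      rw [hform]
      have hterm : ∀ i ∈ Finset.Icc 1 (K n),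
          (∫ ω, (empProb X n i ω) ^ 2 ∂μ) / p n i ≤ 1 / n + p n i := by
        intro i hi
        have hp := hpos n hn i hi
        have h1 := emp_sq_integral_le μ X p K n hn hmeas hpos hsum hdist hindep i hi
        have h2 : (p n i / n + (p n i) ^ 2) / p n i = 1 / n + p n i := by
          field_simp
        rw [← h2]
        gcongr
      have hsum2 : ∑ i ∈ Finset.Icc 1 (K n), (1 / (n:ℝ) + p n i) = (K n : ℝ) / n + 1 := by
        rw [Finset.sum_add_distrib, hsum n hn, Finset.sum_const, nsmul_eq_mul]
        simp [Nat.card_Icc]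
        ring
      have := Finset.sum_le_sum hterm
      rw [hsum2] at this
      linarith
    -- Markov inequality
    set c : ℝ := ε * σ n / Real.sqrt (n:ℝ) with hcdef
    have hc0 : 0 < c := by positivity
    have hsubset : {ω | ε < |Real.sqrt (n : ℝ) / σ n * KL ω|} ⊆ {ω | c ≤ g ω} := by
      intro ω hω
      simp only [Set.mem_setOf_eq] at hω ⊢
      have hKL0 := hKL_nonneg ω
      have hd0 : 0 ≤ Real.sqrt (n:ℝ) / σ n := by positivity
      rw [abs_of_nonneg (mul_nonneg hd0 hKL0)] at hω
      have h2 : ε * σ n < Real.sqrt (n:ℝ) * KL ω := by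
        rw [div_mul_eq_mul_div, lt_div_iff₀ hσ] at hω
        linarith
      rw [hcdef, div_le_iff₀ hsq]
      nlinarith [hKL_le_g ω]
    have hm := mul_meas_ge_le_integral_of_nonneg (μ := μ)
      (Eventually.of_forall hg_nonneg) hg_int c
    have hmono : (μ {ω | ε < |Real.sqrt (n : ℝ) / σ n * KL ω|}).toReal
        ≤ (μ {x | c ≤ g x}).toReal :=
      ENNReal.toReal_mono (measure_ne_top μ _) (measure_mono hsubset)
    have hfin : (μ {ω | ε < |Real.sqrt (n : ℝ) / σ n * KL ω|}).toReal
        ≤ ((K n : ℝ) / n) / c := by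
      rw [le_div_iff₀ hc0]
      calc (μ {ω | ε < |Real.sqrt (n : ℝ) / σ n * KL ω|}).toReal * c
          = c * (μ {ω | ε < |Real.sqrt (n : ℝ) / σ n * KL ω|}).toReal := mul_comm _ _
        _ ≤ c * (μ {x | c ≤ g x}).toReal := by
            exact mul_le_mul_of_nonneg_left hmono hc0.le
        _ ≤ ∫ ω, g ω ∂μ := hm
        _ ≤ (K n : ℝ) / n := hint_g
    have heq : ((K n : ℝ) / n) / c = ε⁻¹ * ((K n : ℝ) / (Real.sqrt (n:ℝ) * σ n)) := by
      have hnsq : Real.sqrt (n:ℝ) ^ 2 = (n:ℝ) := Real.sq_sqrt hn0.le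
      rw [hcdef]
      have hnsq' : Real.sqrt (n:ℝ) * Real.sqrt (n:ℝ) = (n:ℝ) := Real.mul_self_sqrt hn0.le
      field_simp
      linear_combination (K n : ℝ) * hnsq
    rw [heq] at hfin
    exact hfin
  have hdiv : Tendsto (fun n : ℕ => (K n : ℝ) / (Real.sqrt (n:ℝ) * σ n)) atTop (nhds 0) :=
    hKo.tendsto_div_nhds_zero
  apply squeeze_zero' (Eventually.of_forall (fun n => ENNReal.toReal_nonneg))
    (eventually_atTop.2 ⟨1, key⟩)
  simpa using hdiv.const_mul ε⁻¹
end

section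
/- Let $X_1,\dots,X_n$ be independent and identically distributed random variables with $\mathbb{P}(X_1=i)=p(i)$ for $1\le i\le K$, where $p(i)>0$ for all $i$, let $\hat p(i)$ be the empirical distribution, and let $\sigma>0$. Then for any $a>0$, $\mathbb{P}\Big(\frac{\sqrt{n}}{\sigma}\Big|\sum_{i=1}^{K}\hat p(i)\ln\frac{\hat p(i)}{p(i)}\Big|>a\Big) \le \frac{K-1}{a\sqrt{n}\,\sigma}$. -/
open MeasureTheory ProbabilityTheory

/-- The empirical distribution `p̂(i)(ω) = (1/n) ∑_{j=1}^n 1_{X_j(ω) = i}`. -/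
noncomputable def empP {Ω : Type*} (X : ℕ → Ω → ℕ) (n i : ℕ) (ω : Ω) : ℝ :=
  (∑ j ∈ Finset.Icc 1 n, if X j ω = i then (1 : ℝ) else 0) / n

/-- `q - r ≤ q log(q/r)` for `q ≥ 0`, `r > 0`. -/
lemma kl_term_lower (q r : ℝ) (hq : 0 ≤ q) (hr : 0 < r) :
    q - r ≤ q * Real.log (q / r) := by
  rcases eq_or_lt_of_le hq with h0 | h0
  · simp [← h0]; linarith
  · have hlog : Real.log (r / q) ≤ r / q - 1 := Real.log_le_sub_one_of_pos (by positivity)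
    have hneg : Real.log (q / r) = - Real.log (r / q) := by
      rw [← Real.log_inv]; congr 1; field_simp
    rw [hneg]
    have h2 : q * Real.log (r / q) ≤ q * (r / q - 1) := mul_le_mul_of_nonneg_left hlog hq
    have h3 : q * (r / q - 1) = r - q := by field_simp
    nlinarith

/-- `q log(q/r) ≤ q²/r - q` for `q ≥ 0`, `r > 0`. -/
lemma kl_term_upper (q r : ℝ) (hq : 0 ≤ q) (hr : 0 < r) :
    q * Real.log (q / r) ≤ q ^ 2 / r - q := by
  rcases eq_or_lt_of_le hq with h0 | h0
  · simp [← h0]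
  · have hlog : Real.log (q / r) ≤ q / r - 1 := Real.log_le_sub_one_of_pos (by positivity)
    have h2 : q * Real.log (q / r) ≤ q * (q / r - 1) := mul_le_mul_of_nonneg_left hlog hq
    have h3 : q * (q / r - 1) = q ^ 2 / r - q := by field_simp
    nlinarith

/-- Markov-type bound:
`P((√n/σ)|∑_i p̂(i) ln(p̂(i)/p(i))| > a) ≤ (K−1)/(a √n σ)`
(terms with `p̂(i) = 0` vanish, automatic since `Real.log 0 = 0` in Lean). -/
theorem kl_term_markov_bound
    {Ω : Type*} [MeasurableSpace Ω] (μ : Measure Ω) [IsProbabilityMeasure μ]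
    (X : ℕ → Ω → ℕ) (n K : ℕ) (p : ℕ → ℝ) (σ : ℝ) (a : ℝ)
    (hn : 1 ≤ n) (hK : 1 ≤ K)
    (hmeas : ∀ j, Measurable (X j))
    (hpos : ∀ i ∈ Finset.Icc 1 K, 0 < p i)
    (hsum : ∑ i ∈ Finset.Icc 1 K, p i = 1)
    (hrange : ∀ j ∈ Finset.Icc 1 n, ∀ ω, X j ω ∈ Finset.Icc 1 K)
    (hdist : ∀ j ∈ Finset.Icc 1 n, ∀ i ∈ Finset.Icc 1 K,
      μ {ω | X j ω = i} = ENNReal.ofReal (p i))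
    (hindep : iIndepFun (fun k : Fin n => X (k.1 + 1)) μ)
    (hσ : 0 < σ) (ha : 0 < a) :
    μ {ω | a < Real.sqrt (n : ℝ) / σ *
        |∑ i ∈ Finset.Icc 1 K, empP X n i ω * Real.log (empP X n i ω / p i)|}
      ≤ ENNReal.ofReal (((K : ℝ) - 1) / (a * Real.sqrt (n : ℝ) * σ)) := by
  classical
  have hn0 : (0:ℝ) < n := by exact_mod_cast hn
  set Z : Ω → ℝ := fun ω =>
    ∑ i ∈ Finset.Icc 1 K, empP X n i ω * Real.log (empP X n i ω / p i) with hZdef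
  -- basic facts about empP
  have hemp_nonneg : ∀ i ω, 0 ≤ empP X n i ω := by
    intro i ω
    apply div_nonneg _ hn0.le
    apply Finset.sum_nonneg
    intro j _; split <;> norm_num
  have hemp_le_one : ∀ i ω, empP X n i ω ≤ 1 := by
    intro i ω
    rw [empP, div_le_one hn0]
    calc (∑ j ∈ Finset.Icc 1 n, if X j ω = i then (1:ℝ) else 0)
        ≤ ∑ j ∈ Finset.Icc 1 n, 1 := by
          apply Finset.sum_le_sum; intro j _; split <;> norm_num
      _ = n := by simp
  have hemp_sum : ∀ ω, ∑ i ∈ Finset.Icc 1 K, empP X n i ω = 1 := by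
    intro ω
    unfold empP
    rw [← Finset.sum_div, Finset.sum_comm]
    have h1 : ∀ j ∈ Finset.Icc 1 n,
        ∑ i ∈ Finset.Icc 1 K, (if X j ω = i then (1:ℝ) else 0) = 1 := by
      intro j hj
      rw [Finset.sum_ite_eq (Finset.Icc 1 K) (X j ω) (fun _ => (1:ℝ))]
      simp [hrange j hj ω]
    rw [Finset.sum_congr rfl h1]
    simp
    omega
  have hemp_meas : ∀ i, Measurable (empP X n i) := by
    intro i
    apply Measurable.div_const
    apply Finset.measurable_sum
    intro j _
    exact Measurable.ite ((hmeas j) (measurableSet_singleton i)) measurable_const measurable_const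
  -- pointwise bounds on Z
  have hZ_nonneg : ∀ ω, 0 ≤ Z ω := by
    intro ω
    have h1 : ∑ i ∈ Finset.Icc 1 K, (empP X n i ω - p i) ≤ Z ω := by
      apply Finset.sum_le_sum
      intro i hi
      exact kl_term_lower _ _ (hemp_nonneg i ω) (hpos i hi)
    rw [Finset.sum_sub_distrib, hemp_sum ω, hsum] at h1
    linarith
  have hZ_le : ∀ ω, Z ω ≤ ∑ i ∈ Finset.Icc 1 K, empP X n i ω ^ 2 / p i - 1 := by
    intro ω
    have h1 : Z ω ≤ ∑ i ∈ Finset.Icc 1 K, (empP X n i ω ^ 2 / p i - empP X n i ω) := by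
      apply Finset.sum_le_sum
      intro i hi
      exact kl_term_upper _ _ (hemp_nonneg i ω) (hpos i hi)
    rw [Finset.sum_sub_distrib, hemp_sum ω] at h1
    linarith
  -- measurability and integrability of Z
  have hZ_meas : Measurable Z := by
    apply Finset.measurable_sum
    intro i _
    exact (hemp_meas i).mul (Real.measurable_log.comp ((hemp_meas i).div_const (p i)))
  have hgle : ∀ i ∈ Finset.Icc 1 K, ∀ ω, empP X n i ω ^ 2 / p i ≤ 1 / p i := by
    intro i hi ω
    have hp := hpos i hi
    have h1 : empP X n i ω ^ 2 ≤ 1 := by nlinarith [hemp_nonneg i ω, hemp_le_one i ω]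
    gcongr
  have hZ_int : Integrable Z μ := by
    apply Integrable.mono' (integrable_const (∑ i ∈ Finset.Icc 1 K, 1 / p i))
      hZ_meas.aestronglyMeasurable
    apply ae_of_all
    intro ω
    rw [Real.norm_eq_abs, abs_of_nonneg (hZ_nonneg ω)]
    calc Z ω ≤ ∑ i ∈ Finset.Icc 1 K, empP X n i ω ^ 2 / p i - 1 := hZ_le ω
      _ ≤ ∑ i ∈ Finset.Icc 1 K, 1 / p i := by
          have := Finset.sum_le_sum (fun i hi => hgle i hi ω)
          linarith
  -- product integrals
  have hprod : ∀ j ∈ Finset.Icc 1 n, ∀ j' ∈ Finset.Icc 1 n, ∀ i ∈ Finset.Icc 1 K,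
      ∫ ω, (if X j ω = i then (1:ℝ) else 0) * (if X j' ω = i then (1:ℝ) else 0) ∂μ
        = if j = j' then p i else p i ^ 2 := by
    intro j hj j' hj' i hi
    have hAj : MeasurableSet (X j ⁻¹' {i}) := (hmeas j) (measurableSet_singleton i)
    have hAj' : MeasurableSet (X j' ⁻¹' {i}) := (hmeas j') (measurableSet_singleton i)
    have heq : (fun ω => (if X j ω = i then (1:ℝ) else 0) * (if X j' ω = i then (1:ℝ) else 0))
        = Set.indicator (X j ⁻¹' {i} ∩ X j' ⁻¹' {i}) 1 := by
      ext ω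
      by_cases h1 : X j ω = i <;> by_cases h2 : X j' ω = i <;>
        simp [Set.indicator_apply, Set.mem_preimage, Set.mem_inter_iff, h1, h2]
    have hset : ∀ m, X m ⁻¹' {i} = {ω | X m ω = i} := fun m => rfl
    rw [heq, integral_indicator_one (hAj.inter hAj')]
    by_cases hjj : j = j'
    · subst hjj
      simp only [Set.inter_self, hset, hdist j hj i hi, if_pos rfl]
      rw [if_pos trivial, measureReal_def, hdist j hj i hi]
      exact ENNReal.toReal_ofReal (hpos i hi).le
    · have hj1 : 1 ≤ j ∧ j ≤ n := by simpa using hj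
      have hj'1 : 1 ≤ j' ∧ j' ≤ n := by simpa using hj'
      have hne : (⟨j - 1, by omega⟩ : Fin n) ≠ (⟨j' - 1, by omega⟩ : Fin n) := by
        simp only [ne_eq, Fin.mk.injEq]
        omega
      have hind := hindep.indepFun hne
      simp only [show j - 1 + 1 = j by omega, show j' - 1 + 1 = j' by omega] at hind
      have hmul := hind.measure_inter_preimage_eq_mul {i} {i}
        (measurableSet_singleton i) (measurableSet_singleton i)
      rw [measureReal_def, hmul, if_neg hjj, ENNReal.toReal_mul]
      simp only [hset, hdist j hj i hi, hdist j' hj' i hi,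
        ENNReal.toReal_ofReal (hpos i hi).le]
      ring
  -- second moment of empP
  have hsqint : ∀ i ∈ Finset.Icc 1 K,
      ∫ ω, empP X n i ω ^ 2 ∂μ = p i ^ 2 + (p i - p i ^ 2) / n := by
    intro i hi
    have hpint : ∀ j j' : ℕ, Integrable
        (fun ω => (if X j ω = i then (1:ℝ) else 0) * (if X j' ω = i then (1:ℝ) else 0)) μ := by
      intro j j'
      have heq : (fun ω => (if X j ω = i then (1:ℝ) else 0) * (if X j' ω = i then (1:ℝ) else 0))
          = Set.indicator (X j ⁻¹' {i} ∩ X j' ⁻¹' {i}) 1 := by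
        ext ω
        by_cases h1 : X j ω = i <;> by_cases h2 : X j' ω = i <;>
          simp [Set.indicator_apply, Set.mem_preimage, Set.mem_inter_iff, h1, h2]
      rw [heq]
      exact (integrable_const (1:ℝ)).indicator
        (((hmeas j) (measurableSet_singleton i)).inter ((hmeas j') (measurableSet_singleton i)))
    have hexp : (fun ω => empP X n i ω ^ 2) = fun ω =>
        (∑ j ∈ Finset.Icc 1 n, ∑ j' ∈ Finset.Icc 1 n,
          (if X j ω = i then (1:ℝ) else 0) * (if X j' ω = i then (1:ℝ) else 0)) / (n^2 : ℝ) := by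
      ext ω
      rw [empP, div_pow, sq, Finset.sum_mul_sum]
    rw [hexp]
    rw [integral_div]
    rw [integral_finset_sum _ (fun j _ => integrable_finset_sum _ (fun j' _ => hpint j j'))]
    have h3 : ∀ j ∈ Finset.Icc 1 n,
        (∫ ω, ∑ j' ∈ Finset.Icc 1 n,
          (if X j ω = i then (1:ℝ) else 0) * (if X j' ω = i then (1:ℝ) else 0) ∂μ)
        = (n : ℝ) * p i ^ 2 + (p i - p i ^ 2) := by
      intro j hj
      rw [integral_finset_sum _ (fun j' _ => hpint j j')]
      rw [Finset.sum_congr rfl (fun j' hj' => hprod j hj j' hj' i hi)]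
      have h2 : ∀ j' : ℕ, (if j = j' then p i else p i ^ 2)
          = p i ^ 2 + (if j = j' then p i - p i ^ 2 else 0) := by
        intro j'; split <;> ring
      simp only [h2]
      rw [Finset.sum_add_distrib, Finset.sum_const, Finset.sum_ite_eq, if_pos hj]
      simp [Nat.card_Icc]
    rw [Finset.sum_congr rfl h3, Finset.sum_const]
    simp only [Nat.card_Icc, Nat.add_sub_cancel, nsmul_eq_mul]
    field_simp
  -- integrability of empP²
  have hsq_int : ∀ i, Integrable (fun ω => empP X n i ω ^ 2) μ := by
    intro i
    apply Integrable.mono' (integrable_const (1:ℝ))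
      (((hemp_meas i).pow_const 2).aestronglyMeasurable)
    apply ae_of_all
    intro ω
    rw [Real.norm_eq_abs, abs_of_nonneg (by positivity)]
    nlinarith [hemp_nonneg i ω, hemp_le_one i ω]
  -- expectation bound
  have hEZ : ∫ ω, Z ω ∂μ ≤ ((K:ℝ) - 1) / n := by
    have hW_int : Integrable
        (fun ω => ∑ i ∈ Finset.Icc 1 K, empP X n i ω ^ 2 / p i - 1) μ := by
      apply Integrable.sub _ (integrable_const 1)
      exact integrable_finset_sum _ (fun i _ => (hsq_int i).div_const (p i))
    have h1 : ∫ ω, Z ω ∂μ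
        ≤ ∫ ω, (∑ i ∈ Finset.Icc 1 K, empP X n i ω ^ 2 / p i - 1) ∂μ :=
      integral_mono hZ_int hW_int hZ_le
    have h2 : ∫ ω, (∑ i ∈ Finset.Icc 1 K, empP X n i ω ^ 2 / p i - 1) ∂μ
        = ((K:ℝ) - 1) / n := by
      rw [integral_sub (integrable_finset_sum _ (fun i _ => (hsq_int i).div_const (p i)))
        (integrable_const 1)]
      rw [integral_finset_sum _ (fun i _ => (hsq_int i).div_const (p i))]
      have h4 : ∀ i ∈ Finset.Icc 1 K,
          ∫ ω, empP X n i ω ^ 2 / p i ∂μ = p i + (1 - p i) / n := by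
        intro i hi
        rw [integral_div, hsqint i hi]
        have hp := hpos i hi
        field_simp
      rw [Finset.sum_congr rfl h4, Finset.sum_add_distrib, hsum, ← Finset.sum_div,
        Finset.sum_sub_distrib, Finset.sum_const, hsum]
      simp only [Nat.card_Icc, Nat.add_sub_cancel, nsmul_eq_mul, mul_one, integral_const,
        measure_univ, ENNReal.toReal_one, probReal_univ, one_smul]
      ring
    linarith
  -- Markov's inequality and arithmetic
  have hsq : (0:ℝ) < Real.sqrt n := Real.sqrt_pos.mpr hn0
  set c : ℝ := a * σ / Real.sqrt n with hc
  have hc0 : 0 < c := by positivity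
  have hsub : {ω | a < Real.sqrt (n:ℝ) / σ * |Z ω|} ⊆ {ω | c ≤ Z ω} := by
    intro ω hω
    simp only [Set.mem_setOf_eq] at hω ⊢
    rw [abs_of_nonneg (hZ_nonneg ω)] at hω
    rw [hc, div_le_iff₀ hsq]
    calc a * σ ≤ (Real.sqrt n / σ * Z ω) * σ := by nlinarith
      _ = Z ω * Real.sqrt n := by field_simp
  have hmarkov := mul_meas_ge_le_integral_of_nonneg (ae_of_all μ hZ_nonneg) hZ_int c
  have htoReal : (μ {ω | c ≤ Z ω}).toReal ≤ (((K:ℝ) - 1) / n) / c := by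
    rw [le_div_iff₀ hc0, mul_comm]
    exact hmarkov.trans hEZ
  have hfin : μ {ω | c ≤ Z ω} ≠ ⊤ := measure_ne_top μ _
  calc μ {ω | a < Real.sqrt (n:ℝ) / σ * |Z ω|}
      ≤ μ {ω | c ≤ Z ω} := measure_mono hsub
    _ = ENNReal.ofReal ((μ {ω | c ≤ Z ω}).toReal) := (ENNReal.ofReal_toReal hfin).symm
    _ ≤ ENNReal.ofReal ((((K:ℝ) - 1) / n) / c) := ENNReal.ofReal_le_ofReal htoReal
    _ = ENNReal.ofReal (((K : ℝ) - 1) / (a * Real.sqrt (n : ℝ) * σ)) := by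
        congr 1
        rw [hc]
        have h1 : Real.sqrt n * Real.sqrt n = (n:ℝ) := Real.mul_self_sqrt hn0.le
        field_simp
        linear_combination ((K:ℝ)-1)*h1
end

section
/- Let $X_1,\dots,X_n$ be independent and identically distributed random variables with $\mathbb{P}(X_1=i)=p(i)$ for $1\le i\le K$, where $p(i)>0$ for all $i$, let $\hat p(i)$ be the empirical distribution, and let $\sigma>0$, $b>0$. Then for any $\varepsilon>0$, $\mathbb{P}\Big(\frac{\sqrt{n}}{b\,\sigma}\Big|\sum_{i=1}^{K}\hat p(i)\ln\frac{\hat p(i)}{p(i)}\Big|>\varepsilon\Big) \le 2\sum_{i=1}^{K}\exp\big(-2\varepsilon\sqrt{n}\,b\,\sigma\, p(i)^2\big)$. -/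
open MeasureTheory ProbabilityTheory

lemma bernoulli_mgf_le {p : ℝ} (hp0 : 0 ≤ p) (hp1 : p ≤ 1) (s : ℝ) :
    1 - p + p * Real.exp s ≤ Real.exp (p * s + s ^ 2 / 8) := by
  set D : ℝ → ℝ := fun s => 1 - p + p * Real.exp s with hDdef
  have hDpos : ∀ s, 0 < D s := by
    intro s
    rcases lt_or_eq_of_le hp1 with h | h
    · have : 0 < 1 - p := by linarith
      have : 0 ≤ p * Real.exp s := mul_nonneg hp0 (Real.exp_pos s).le
      simp only [hDdef]; linarith
    · simp only [hDdef, ← h]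
      have := Real.exp_pos s
      nlinarith
  set f : ℝ → ℝ := fun s => p * s + s ^ 2 / 8 - Real.log (D s) with hfdef
  set g : ℝ → ℝ := fun s => p + s / 4 - p * Real.exp s / D s with hgdef
  have hD : ∀ s, HasDerivAt D (p * Real.exp s) s := by
    intro s
    exact ((Real.hasDerivAt_exp s).const_mul p).const_add (1 - p)
  have hf : ∀ s, HasDerivAt f (g s) s := by
    intro s
    have h1 : HasDerivAt (fun s : ℝ => p * s + s ^ 2 / 8) (p + s / 4) s := by
      have := ((hasDerivAt_id s).const_mul p).add
        (((hasDerivAt_pow 2 s)).div_const 8)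
      exact this.congr_deriv (by norm_num; ring)
    have h2 : HasDerivAt (fun s => Real.log (D s)) (p * Real.exp s / D s) s :=
      (hD s).log (hDpos s).ne'
    exact h1.sub h2
  have hg : ∀ s, HasDerivAt g
      (1 / 4 - (p * Real.exp s * D s - p * Real.exp s * (p * Real.exp s)) / (D s) ^ 2) s := by
    intro s
    have h1 : HasDerivAt (fun s : ℝ => p + s / 4) (1 / 4) s := by
      simpa using ((hasDerivAt_id s).div_const 4).const_add p
    have h2 : HasDerivAt (fun s => p * Real.exp s / D s)
        ((p * Real.exp s * D s - p * Real.exp s * (p * Real.exp s)) / (D s) ^ 2) s :=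
      ((Real.hasDerivAt_exp s).const_mul p).div (hD s) (hDpos s).ne'
    exact h1.sub h2
  have hg' : ∀ s, 0 ≤ 1 / 4 - (p * Real.exp s * D s - p * Real.exp s * (p * Real.exp s)) / (D s) ^ 2 := by
    intro s
    have hDp := hDpos s
    have hsq : (0:ℝ) < (D s) ^ 2 := by positivity
    rw [sub_nonneg, div_le_iff₀ hsq]
    have hE := Real.exp_pos s
    have hDe : D s = 1 - p + p * Real.exp s := rfl
    nlinarith [sq_nonneg (1 - p - p * Real.exp s), mul_nonneg hp0 hE.le]
  have hgmono : Monotone g :=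
    monotone_of_deriv_nonneg (fun s => (hg s).differentiableAt)
      (fun s => by rw [(hg s).deriv]; exact hg' s)
  have hg0 : g 0 = 0 := by
    simp [hgdef, hDdef]
  have hfdiff : Differentiable ℝ f := fun s => (hf s).differentiableAt
  have hderiv : ∀ s, deriv f s = g s := fun s => (hf s).deriv
  have hfmono : MonotoneOn f (Set.Ici 0) := by
    apply monotoneOn_of_deriv_nonneg (convex_Ici 0) hfdiff.continuous.continuousOn
      (fun s _ => (hf s).differentiableAt.differentiableWithinAt)
    intro s hs
    rw [hderiv]
    rw [interior_Ici] at hs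
    calc (0:ℝ) = g 0 := hg0.symm
    _ ≤ g s := hgmono (le_of_lt hs)
  have hfanti : AntitoneOn f (Set.Iic 0) := by
    apply antitoneOn_of_deriv_nonpos (convex_Iic 0) hfdiff.continuous.continuousOn
      (fun s _ => (hf s).differentiableAt.differentiableWithinAt)
    intro s hs
    rw [hderiv]
    rw [interior_Iic] at hs
    calc g s ≤ g 0 := hgmono (le_of_lt hs)
    _ = 0 := hg0
  have hf0 : f 0 = 0 := by simp [hfdef, hDdef]
  have hfnonneg : ∀ s, 0 ≤ f s := by
    intro s
    rcases le_or_gt 0 s with h | h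
    · rw [← hf0]; exact hfmono Set.self_mem_Ici h h
    · rw [← hf0]; exact hfanti h.le Set.self_mem_Iic h.le
  have := hfnonneg s
  have hlog : Real.log (D s) ≤ p * s + s ^ 2 / 8 := by
    simp only [hfdef] at this; linarith
  calc D s = Real.exp (Real.log (D s)) := (Real.exp_log (hDpos s)).symm
  _ ≤ Real.exp (p * s + s ^ 2 / 8) := Real.exp_le_exp.mpr hlog

lemma indicator_tail {Ω : Type*} [MeasurableSpace Ω] (μ : Measure Ω) [IsProbabilityMeasure μ]
    (X : ℕ → Ω → ℕ) (n i : ℕ) (q : ℝ) (hn : 1 ≤ n)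
    (hmeas : ∀ j, Measurable (X j))
    (hq0 : 0 ≤ q) (hq1 : q ≤ 1)
    (hdist : ∀ j ∈ Finset.Icc 1 n, μ {ω | X j ω = i} = ENNReal.ofReal q)
    (hindep : iIndepFun (fun k : Fin n => X (k.1 + 1)) μ)
    (t : ℝ) (ht : 0 < t) :
    μ {ω | t < |empP X n i ω - q|} ≤ ENNReal.ofReal (2 * Real.exp (-2 * n * t ^ 2)) := by
  have hn0 : (0:ℝ) < n := by exact_mod_cast hn
  set Y : Fin n → Ω → ℝ := fun k ω => if X (k.1 + 1) ω = i then 1 else 0 with hYdef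
  have hYmeas : ∀ k, Measurable (Y k) := by
    intro k
    exact Measurable.ite (hmeas _ (MeasurableSet.singleton i)) measurable_const measurable_const
  have hYindep : iIndepFun Y μ := by
    have := hindep.comp (fun (k : Fin n) (m : ℕ) => if m = i then (1:ℝ) else 0)
      (fun k => by exact Measurable.of_discrete)
    exact this
  -- each Y k ∈ Fin n has index k.1+1 ∈ Icc 1 n
  have hmem : ∀ k : Fin n, k.1 + 1 ∈ Finset.Icc 1 n := by
    intro k; simp [Finset.mem_Icc]
  -- integrability of exp (s * Y k)
  have hexpY : ∀ (s : ℝ) (k : Fin n) (ω : Ω),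
      Real.exp (s * Y k ω) = 1 + (Real.exp s - 1) * Y k ω := by
    intro s k ω
    by_cases h : X (k.1 + 1) ω = i <;> simp [hYdef, h]
  have hYint : ∀ k, Integrable (Y k) μ := by
    intro k
    refine (integrable_const (1:ℝ)).mono' ((hYmeas k).aestronglyMeasurable) ?_
    filter_upwards with ω
    by_cases h : X (k.1 + 1) ω = i <;> simp [hYdef, h]
  have hint : ∀ (s : ℝ) (k : Fin n), Integrable (fun ω => Real.exp (s * Y k ω)) μ := by
    intro s k
    have : (fun ω => Real.exp (s * Y k ω)) = fun ω => 1 + (Real.exp s - 1) * Y k ω :=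
      funext fun ω => hexpY s k ω
    rw [this]
    exact (integrable_const 1).add ((hYint k).const_mul _)
  -- mean of Y k
  have hYmean : ∀ k, μ[Y k] = q := by
    intro k
    have hYind : Y k = Set.indicator (X (k.1+1) ⁻¹' {i}) (fun _ => (1:ℝ)) := by
      funext ω
      by_cases h : X (k.1 + 1) ω = i <;>
        simp [hYdef, h, Set.indicator_apply, Set.mem_preimage]
    have hpre : (X (k.1+1) ⁻¹' {i} : Set Ω) = {ω | X (k.1+1) ω = i} := rfl
    rw [hYind, integral_indicator_const (1:ℝ) (hmeas _ (MeasurableSet.singleton i)), hpre]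
    rw [measureReal_def, hdist _ (hmem k), smul_eq_mul, mul_one, ENNReal.toReal_ofReal hq0]
  -- mgf of Y k
  have hmgfY : ∀ (s : ℝ) (k : Fin n), mgf (Y k) μ s = 1 - q + q * Real.exp s := by
    intro s k
    rw [mgf]
    simp_rw [hexpY s]
    rw [integral_add (integrable_const 1) ((hYint k).const_mul _), integral_const,
      integral_const_mul, hYmean k]
    simp; ring
  -- mgf of the sum
  set S : Ω → ℝ := ∑ k : Fin n, Y k with hSdef
  have hmgfS : ∀ s : ℝ, mgf S μ s = (1 - q + q * Real.exp s) ^ n := by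
    intro s
    rw [hSdef, hYindep.mgf_sum hYmeas Finset.univ]
    simp_rw [hmgfY s]
    simp
  have hSint : ∀ s : ℝ, Integrable (fun ω => Real.exp (s * S ω)) μ := by
    intro s
    exact hYindep.integrable_exp_mul_sum hYmeas (fun k _ => hint s k)
  have hDpos : ∀ s : ℝ, (0:ℝ) < 1 - q + q * Real.exp s := by
    intro s
    rcases le_or_gt 1 (Real.exp s) with h | h
    · nlinarith
    · nlinarith [Real.exp_pos s, mul_nonneg (sub_nonneg.2 hq1) (sub_nonneg.2 h.le)]
  have hmgfS_le : ∀ s : ℝ, mgf S μ s ≤ Real.exp (n * (q * s + s ^ 2 / 8)) := by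
    intro s
    rw [hmgfS s]
    calc (1 - q + q * Real.exp s) ^ n ≤ (Real.exp (q * s + s ^ 2 / 8)) ^ n := by
          exact pow_le_pow_left₀ (hDpos s).le (bernoulli_mgf_le hq0 hq1 s) n
    _ = Real.exp (n * (q * s + s ^ 2 / 8)) := by rw [← Real.exp_nat_mul]
  -- upper tail
  have hupper : (μ {ω | (q + t) * n ≤ S ω}).toReal ≤ Real.exp (-2 * n * t ^ 2) := by
    have h := measure_ge_le_exp_mul_mgf (μ := μ) (X := S) ((q + t) * n)
      (t := 4 * t) (by positivity) (hSint (4 * t))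
    refine h.trans ?_
    calc Real.exp (-(4*t) * ((q + t) * n)) * mgf S μ (4*t)
        ≤ Real.exp (-(4*t) * ((q + t) * n)) * Real.exp (n * (q * (4*t) + (4*t) ^ 2 / 8)) := by
          exact mul_le_mul_of_nonneg_left (hmgfS_le _) (Real.exp_pos _).le
    _ = Real.exp (-2 * n * t ^ 2) := by rw [← Real.exp_add]; ring_nf
  have hlower : (μ {ω | S ω ≤ (q - t) * n}).toReal ≤ Real.exp (-2 * n * t ^ 2) := by
    have h := measure_le_le_exp_mul_mgf (μ := μ) (X := S) ((q - t) * n)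
      (t := -(4 * t)) (by linarith) (hSint (-(4 * t)))
    refine h.trans ?_
    calc Real.exp (-(-(4*t)) * ((q - t) * n)) * mgf S μ (-(4*t))
        ≤ Real.exp (-(-(4*t)) * ((q - t) * n)) * Real.exp (n * (q * (-(4*t)) + (-(4*t)) ^ 2 / 8)) := by
          exact mul_le_mul_of_nonneg_left (hmgfS_le _) (Real.exp_pos _).le
    _ = Real.exp (-2 * n * t ^ 2) := by rw [← Real.exp_add]; ring_nf
  -- empP = S / n
  have hempS : ∀ ω, empP X n i ω = S ω / n := by
    intro ω
    rw [empP, hSdef]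
    congr 1
    rw [Finset.sum_apply]
    have h1 : Finset.Icc 1 n = Finset.Ico 1 (n+1) := by
      rw [Finset.Ico_add_one_right_eq_Icc]
    rw [h1, Finset.sum_Ico_eq_sum_range]
    simp only [Nat.add_sub_cancel]
    rw [← Fin.sum_univ_eq_sum_range (fun j => if X (1 + j) ω = i then (1:ℝ) else 0)]
    simp only [hYdef]
    exact Finset.sum_congr rfl (fun k _ => by rw [add_comm 1 k.1])
  -- event inclusion
  have hsub : {ω | t < |empP X n i ω - q|} ⊆
      {ω | (q + t) * n ≤ S ω} ∪ {ω | S ω ≤ (q - t) * n} := by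
    intro ω hω
    simp only [Set.mem_setOf_eq, lt_abs] at hω
    simp only [Set.mem_union, Set.mem_setOf_eq]
    rw [hempS ω] at hω
    rcases hω with h | h
    · left
      have h2 : q + t < S ω / n := by linarith
      have := (lt_div_iff₀ hn0).mp h2
      linarith
    · right
      have h2 : S ω / n < q - t := by linarith
      have := (div_lt_iff₀ hn0).mp h2
      linarith
  calc μ {ω | t < |empP X n i ω - q|}
      ≤ μ {ω | (q + t) * n ≤ S ω} + μ {ω | S ω ≤ (q - t) * n} :=
        (measure_mono hsub).trans (measure_union_le _ _)
  _ ≤ ENNReal.ofReal (Real.exp (-2 * n * t ^ 2)) + ENNReal.ofReal (Real.exp (-2 * n * t ^ 2)) := by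
      gcongr
      · exact (ENNReal.le_ofReal_iff_toReal_le (measure_ne_top μ _) (Real.exp_pos _).le).mpr hupper
      · exact (ENNReal.le_ofReal_iff_toReal_le (measure_ne_top μ _) (Real.exp_pos _).le).mpr hlower
  _ = ENNReal.ofReal (2 * Real.exp (-2 * n * t ^ 2)) := by
      rw [← ENNReal.ofReal_add (Real.exp_pos _).le (Real.exp_pos _).le]
      ring_nf

/-- Hoeffding-type bound:
`P((√n/(bσ))|∑_i p̂(i) ln(p̂(i)/p(i))| > ε) ≤ 2 ∑_i exp(−2 ε √n b σ p(i)²)`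
(terms with `p̂(i) = 0` vanish, automatic since `Real.log 0 = 0` in Lean). -/
theorem kl_term_hoeffding_bound
    {Ω : Type*} [MeasurableSpace Ω] (μ : Measure Ω) [IsProbabilityMeasure μ]
    (X : ℕ → Ω → ℕ) (n K : ℕ) (p : ℕ → ℝ) (σ b : ℝ)
    (hn : 1 ≤ n) (hK : 1 ≤ K)
    (hmeas : ∀ j, Measurable (X j))
    (hpos : ∀ i ∈ Finset.Icc 1 K, 0 < p i)
    (hsum : ∑ i ∈ Finset.Icc 1 K, p i = 1)
    (hrange : ∀ j ∈ Finset.Icc 1 n, ∀ ω, X j ω ∈ Finset.Icc 1 K)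
    (hdist : ∀ j ∈ Finset.Icc 1 n, ∀ i ∈ Finset.Icc 1 K,
      μ {ω | X j ω = i} = ENNReal.ofReal (p i))
    (hindep : iIndepFun (fun k : Fin n => X (k.1 + 1)) μ)
    (hσ : 0 < σ) (hb : 0 < b) :
    ∀ ε : ℝ, 0 < ε →
      μ {ω | ε < Real.sqrt (n : ℝ) / (b * σ) *
          |∑ i ∈ Finset.Icc 1 K, empP X n i ω * Real.log (empP X n i ω / p i)|}
        ≤ ENNReal.ofReal (2 * ∑ i ∈ Finset.Icc 1 K,
            Real.exp (-2 * ε * Real.sqrt (n : ℝ) * b * σ * (p i) ^ 2)) := by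
  intro ε hε
  have hn0 : (0:ℝ) < n := by exact_mod_cast hn
  have hsn : (0:ℝ) < Real.sqrt n := Real.sqrt_pos.mpr hn0
  have hnss : (n:ℝ) = Real.sqrt n * Real.sqrt n := (Real.mul_self_sqrt hn0.le).symm
  set δ : ℝ := Real.sqrt (ε * b * σ / Real.sqrt n) with hδdef
  have hδpos : 0 < δ := Real.sqrt_pos.mpr (by positivity)
  have hδsq : δ ^ 2 = ε * b * σ / Real.sqrt n := Real.sq_sqrt (by positivity)
  -- basic facts about empP
  have hq0 : ∀ i ω, 0 ≤ empP X n i ω := by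
    intro i ω
    apply div_nonneg _ hn0.le
    apply Finset.sum_nonneg
    intro j _
    split <;> norm_num
  have hqsum : ∀ ω, ∑ i ∈ Finset.Icc 1 K, empP X n i ω = 1 := by
    intro ω
    simp only [empP]
    rw [← Finset.sum_div]
    rw [Finset.sum_comm]
    have : ∀ j ∈ Finset.Icc 1 n,
        (∑ i ∈ Finset.Icc 1 K, if X j ω = i then (1:ℝ) else 0) = 1 := by
      intro j hj
      rw [Finset.sum_ite_eq (Finset.Icc 1 K) (X j ω) (fun _ => (1:ℝ))]
      simp [hrange j hj ω]
    rw [Finset.sum_congr rfl this]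
    rw [Finset.sum_const]
    simp [Nat.card_Icc]
    omega
  have hp1 : ∀ i ∈ Finset.Icc 1 K, p i ≤ 1 := by
    intro i hi
    calc p i ≤ ∑ i ∈ Finset.Icc 1 K, p i :=
      Finset.single_le_sum (fun j hj => (hpos j hj).le) hi
    _ = 1 := hsum
  -- event inclusion
  have hincl : {ω | ε < Real.sqrt (n : ℝ) / (b * σ) *
          |∑ i ∈ Finset.Icc 1 K, empP X n i ω * Real.log (empP X n i ω / p i)|} ⊆
      ⋃ i ∈ Finset.Icc 1 K, {ω | p i * δ < |empP X n i ω - p i|} := by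
    intro ω hω
    simp only [Set.mem_setOf_eq] at hω
    by_contra hc
    simp only [Set.mem_iUnion, Set.mem_setOf_eq, not_exists, not_lt] at hc
    set L := ∑ i ∈ Finset.Icc 1 K, empP X n i ω * Real.log (empP X n i ω / p i) with hLdef
    have hlow : ∀ i ∈ Finset.Icc 1 K,
        empP X n i ω - p i ≤ empP X n i ω * Real.log (empP X n i ω / p i) := by
      intro i hi
      rcases eq_or_lt_of_le (hq0 i ω) with h | h
      · rw [← h]; simp [(hpos i hi).le]
      · have h1 : Real.log (p i / empP X n i ω) ≤ p i / empP X n i ω - 1 :=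
          Real.log_le_sub_one_of_pos (div_pos (hpos i hi) h)
        have h2 : Real.log (empP X n i ω / p i) = - Real.log (p i / empP X n i ω) := by
          rw [← Real.log_inv, inv_div]
        rw [h2]
        have h3 : 1 - p i / empP X n i ω ≤ - Real.log (p i / empP X n i ω) := by linarith
        calc empP X n i ω - p i = empP X n i ω * (1 - p i / empP X n i ω) := by
              field_simp
        _ ≤ empP X n i ω * (- Real.log (p i / empP X n i ω)) :=
              mul_le_mul_of_nonneg_left h3 h.le
    have hup : ∀ i ∈ Finset.Icc 1 K,
        empP X n i ω * Real.log (empP X n i ω / p i) ≤ p i * δ ^ 2 + empP X n i ω - p i := by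
      intro i hi
      have hpi := hpos i hi
      rcases eq_or_lt_of_le (hq0 i ω) with h | h
      · rw [← h]
        have h6 := hc i hi
        rw [← h, zero_sub, abs_neg, abs_of_pos hpi] at h6
        simp only [zero_mul, zero_div, Real.log_zero, mul_zero, zero_add]
        nlinarith [hδpos]
      · have h1 : Real.log (empP X n i ω / p i) ≤ empP X n i ω / p i - 1 :=
          Real.log_le_sub_one_of_pos (div_pos h hpi)
        have h2 : empP X n i ω * Real.log (empP X n i ω / p i)
            ≤ empP X n i ω * (empP X n i ω / p i - 1) :=
          mul_le_mul_of_nonneg_left h1 h.le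
        have h3 : empP X n i ω * (empP X n i ω / p i - 1)
            = (empP X n i ω - p i) ^ 2 / p i + empP X n i ω - p i := by
          field_simp
          ring
        have h4 : (empP X n i ω - p i) ^ 2 ≤ (p i * δ) ^ 2 := by
          have := hc i hi
          have habs : |empP X n i ω - p i| ^ 2 ≤ (p i * δ) ^ 2 := by
            apply pow_le_pow_left₀ (abs_nonneg _) this
          rwa [sq_abs] at habs
        have h5 : (empP X n i ω - p i) ^ 2 / p i ≤ p i * δ ^ 2 := by
          rw [div_le_iff₀ hpi]
          calc (empP X n i ω - p i) ^ 2 ≤ (p i * δ) ^ 2 := h4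
          _ = p i * δ ^ 2 * p i := by ring
        linarith
    have hL0 : 0 ≤ L := by
      have := Finset.sum_le_sum hlow
      rw [← hLdef] at this
      have heq : ∑ i ∈ Finset.Icc 1 K, (empP X n i ω - p i) = 0 := by
        rw [Finset.sum_sub_distrib, hqsum ω, hsum]; ring
      linarith [heq ▸ this]
    have hLup : L ≤ δ ^ 2 := by
      have := Finset.sum_le_sum hup
      rw [← hLdef] at this
      have heq : ∑ i ∈ Finset.Icc 1 K, (p i * δ ^ 2 + empP X n i ω - p i) = δ ^ 2 := by
        have : ∀ i ∈ Finset.Icc 1 K, p i * δ ^ 2 + empP X n i ω - p i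
            = p i * δ ^ 2 + (empP X n i ω - p i) := by intro i _; ring
        rw [Finset.sum_congr rfl this, Finset.sum_add_distrib, ← Finset.sum_mul, hsum,
          Finset.sum_sub_distrib, hqsum ω, hsum]
        ring
      linarith [heq ▸ this]
    have habsL : |L| ≤ δ ^ 2 := abs_le.mpr ⟨by linarith, hLup⟩
    have hfac : 0 < Real.sqrt (n:ℝ) / (b * σ) := by positivity
    have : Real.sqrt (n : ℝ) / (b * σ) * |L| ≤ Real.sqrt (n:ℝ) / (b * σ) * δ ^ 2 :=
      mul_le_mul_of_nonneg_left habsL hfac.le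
    have heq2 : Real.sqrt (n:ℝ) / (b * σ) * δ ^ 2 = ε := by
      rw [hδsq]
      field_simp
    rw [heq2] at this
    exact absurd hω (not_lt.mpr this)
  -- union bound
  calc μ {ω | ε < Real.sqrt (n : ℝ) / (b * σ) *
          |∑ i ∈ Finset.Icc 1 K, empP X n i ω * Real.log (empP X n i ω / p i)|}
      ≤ μ (⋃ i ∈ Finset.Icc 1 K, {ω | p i * δ < |empP X n i ω - p i|}) := measure_mono hincl
  _ ≤ ∑ i ∈ Finset.Icc 1 K, μ {ω | p i * δ < |empP X n i ω - p i|} :=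
      measure_biUnion_finset_le _ _
  _ ≤ ∑ i ∈ Finset.Icc 1 K,
        ENNReal.ofReal (2 * Real.exp (-2 * ε * Real.sqrt (n:ℝ) * b * σ * (p i) ^ 2)) := by
      apply Finset.sum_le_sum
      intro i hi
      have htail := indicator_tail μ X n i (p i) hn hmeas (hpos i hi).le (hp1 i hi)
        (fun j hj => hdist j hj i hi) hindep (p i * δ) (mul_pos (hpos i hi) hδpos)
      have hexp : -2 * (n:ℝ) * (p i * δ) ^ 2 = -2 * ε * Real.sqrt (n:ℝ) * b * σ * (p i) ^ 2 := by
        have : (p i * δ) ^ 2 = p i ^ 2 * δ ^ 2 := by ring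
        rw [this, hδsq]
        field_simp
        linear_combination (-(p i ^ 2)) * hnss
      rwa [hexp] at htail
  _ = ENNReal.ofReal (2 * ∑ i ∈ Finset.Icc 1 K,
        Real.exp (-2 * ε * Real.sqrt (n : ℝ) * b * σ * (p i) ^ 2)) := by
      rw [Finset.mul_sum]
      rw [ENNReal.ofReal_sum_of_nonneg]
      intro i _
      positivity
end

section
/- For each integer $K\ge 2$, let $C_K=\sum_{i=1}^{K}\frac{1}{i}$ and consider the Zipf distribution $p_K(i)=(C_K i)^{-1}$ for $1\le i\le K$. Then the variance $\sigma_K^2 = \sum_{i=1}^{K}p_K(i)\ln^2 p_K(i)-\big(\sum_{i=1}^{K}p_K(i)\ln p_K(i)\big)^2$ satisfies $\sigma_K^2 \sim \frac{1}{12}(\ln K)^2$ as $K\to\infty$, i.e. $\lim_{K\to\infty}\sigma_K^2/(\ln K)^2 = 1/12$. -/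
open Filter
open Real Set

/-- The harmonic normalizing constant `C_K = ∑_{i=1}^K 1/i`. -/
noncomputable def harmonicC (K : ℕ) : ℝ := ∑ i ∈ Finset.Icc 1 K, (1 : ℝ) / i

/-- The Zipf distribution `p_K(i) = (C_K i)⁻¹`, `1 ≤ i ≤ K`. -/
noncomputable def zipfP (K i : ℕ) : ℝ := (harmonicC K * i)⁻¹

/-- The variance parameter `σ_K² = ∑_i p_K(i) ln² p_K(i) − (∑_i p_K(i) ln p_K(i))²` of the
Zipf distribution. -/
noncomputable def zipfVar (K : ℕ) : ℝ :=
  ∑ i ∈ Finset.Icc 1 K, zipfP K i * (Real.log (zipfP K i)) ^ 2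
    - (∑ i ∈ Finset.Icc 1 K, zipfP K i * Real.log (zipfP K i)) ^ 2

/-- Antiderivative fact: `d/dx (log x)^(m+1)/(m+1) = (log x)^m / x`. -/
lemma hasDerivAt_logpow (m : ℕ) {x : ℝ} (hx : 0 < x) :
    HasDerivAt (fun y => (Real.log y) ^ (m + 1) / (m + 1)) ((Real.log x) ^ m / x) x := by
  have h := ((Real.hasDerivAt_log hx.ne').fun_pow (m + 1)).div_const ((m : ℝ) + 1)
  refine h.congr_deriv ?_
  have : ((m : ℝ) + 1) ≠ 0 := by positivity
  field_simp
  push_cast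
  ring

lemma integral_logpow (m : ℕ) {a b : ℝ} (ha : 0 < a) (hab : a ≤ b) :
    ∫ x in a..b, (Real.log x) ^ m / x
      = (Real.log b) ^ (m + 1) / (m + 1) - (Real.log a) ^ (m + 1) / (m + 1) := by
  have h : ∀ x ∈ Set.uIcc a b, HasDerivAt (fun y => (Real.log y) ^ (m + 1) / (m + 1))
      ((Real.log x) ^ m / x) x := by
    intro x hx
    rw [Set.uIcc_of_le hab] at hx
    exact hasDerivAt_logpow m (lt_of_lt_of_le ha hx.1)
  refine intervalIntegral.integral_eq_sub_of_hasDerivAt h ?_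
  apply ContinuousOn.intervalIntegrable
  apply ContinuousOn.div
  · refine (Real.continuousOn_log.mono ?_).pow m
    intro x hx
    rw [Set.uIcc_of_le hab] at hx
    exact ne_of_gt (lt_of_lt_of_le ha hx.1)
  · exact continuousOn_id
  · intro x hx; rw [Set.uIcc_of_le hab] at hx; exact ne_of_gt (lt_of_lt_of_le ha hx.1)

lemma two_lt_log {x : ℝ} (hx : (8:ℝ) ≤ x) : 2 < Real.log x := by
  rw [show (2:ℝ) = Real.log (Real.exp 2) by rw [Real.log_exp]]
  apply Real.log_lt_log (Real.exp_pos 2)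
  have h1 : Real.exp 2 = Real.exp 1 * Real.exp 1 := by
    rw [← Real.exp_add]; norm_num
  have h2 := Real.exp_one_lt_d9
  nlinarith [Real.exp_pos 1]

lemma antitoneOn_logpow_div (m : ℕ) (hm : m ≤ 2) :
    AntitoneOn (fun x => (Real.log x) ^ m / x) (Set.Ici (8:ℝ)) := by
  have hderiv : ∀ x ∈ Set.Ici (8:ℝ), HasDerivAt (fun x => (Real.log x) ^ m / x)
      (((m : ℝ) * (Real.log x) ^ (m - 1) - (Real.log x) ^ m) / x ^ 2) x := by
    intro x hx
    have hx0 : (0:ℝ) < x := lt_of_lt_of_le (by norm_num) hx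
    have hu := (Real.hasDerivAt_log hx0.ne').fun_pow m
    have h := hu.div (hasDerivAt_id x) hx0.ne'
    refine h.congr_deriv ?_
    simp only [id]
    field_simp
  have hsign : ∀ x ∈ interior (Set.Ici (8:ℝ)),
      ((m : ℝ) * (Real.log x) ^ (m - 1) - (Real.log x) ^ m) / x ^ 2 ≤ 0 := by
    intro x hx
    rw [interior_Ici] at hx
    have hx8 : (8:ℝ) ≤ x := le_of_lt hx
    have hL := two_lt_log hx8
    have hx0 : (0:ℝ) < x := lt_of_lt_of_le (by norm_num) hx8
    apply div_nonpos_of_nonpos_of_nonneg _ (by positivity)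
    rw [sub_nonpos]
    match m, hm with
    | 0, _ => simp
    | (n+1), h =>
      have hn : ((n:ℝ) + 1) ≤ Real.log x := by
        have : (n:ℝ) ≤ 1 := by exact_mod_cast Nat.lt_succ_iff.mp (Nat.lt_of_lt_of_le (Nat.lt_succ_self n) h)
        linarith
      have e : n + 1 - 1 = n := rfl
      rw [e, pow_succ, Nat.cast_add, Nat.cast_one, mul_comm]
      exact mul_le_mul_of_nonneg_left hn (by positivity)
  have hcont : ContinuousOn (fun x => (Real.log x) ^ m / x) (Set.Ici (8:ℝ)) :=
    fun x hx => ((hderiv x hx).continuousAt).continuousWithinAt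
  apply antitoneOn_of_deriv_nonpos (convex_Ici 8) hcont
  · intro x hx
    exact ((hderiv x (interior_subset hx)).differentiableAt).differentiableWithinAt
  · intro x hx
    rw [(hderiv x (interior_subset hx)).deriv]
    exact hsign x hx

noncomputable def Aseq (m : ℕ) (K : ℕ) : ℝ := ∑ i ∈ Finset.Icc 1 K, (Real.log i) ^ m / i

lemma Aseq_lower (m : ℕ) (hm : m ≤ 2) {K : ℕ} (hK : 8 ≤ K) :
    (Real.log K) ^ (m+1) / (m+1) - (Real.log 8) ^ (m+1) / (m+1) ≤ Aseq m K := by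
  have hKr : (8:ℝ) ≤ (K:ℝ) := by exact_mod_cast hK
  have hf : AntitoneOn (fun x => (Real.log x) ^ m / x) (Set.Icc ((8:ℕ):ℝ) ((K:ℕ):ℝ)) := by
    apply (antitoneOn_logpow_div m hm).mono
    intro x hx
    have := hx.1
    simp only [Nat.cast_ofNat] at this
    exact this
  have h1 := hf.integral_le_sum_Ico hK
  have h2 : (∫ x in ((8:ℕ):ℝ)..((K:ℕ):ℝ), (Real.log x) ^ m / x)
      = (Real.log K) ^ (m+1) / (m+1) - (Real.log 8) ^ (m+1) / (m+1) := by
    rw [show ((8:ℕ):ℝ) = (8:ℝ) by norm_num]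
    exact integral_logpow m (by norm_num) hKr
  rw [h2] at h1
  refine le_trans h1 ?_
  apply Finset.sum_le_sum_of_subset_of_nonneg
  · intro x hx
    simp only [Finset.mem_Ico] at hx
    simp only [Finset.mem_Icc]
    omega
  · intro i hi _
    simp only [Finset.mem_Icc] at hi
    have hi1 : (1:ℝ) ≤ (i:ℝ) := by exact_mod_cast hi.1
    have : (0:ℝ) ≤ Real.log i := Real.log_nonneg hi1
    positivity

lemma Aseq_upper (m : ℕ) (hm : m ≤ 2) {K : ℕ} (hK : 8 ≤ K) :
    Aseq m K ≤ (∑ i ∈ Finset.Icc 1 8, (Real.log (i:ℕ)) ^ m / (i:ℕ))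
      + ((Real.log K) ^ (m+1) / (m+1) - (Real.log 8) ^ (m+1) / (m+1)) := by
  have hKr : (8:ℝ) ≤ (K:ℝ) := by exact_mod_cast hK
  have hf : AntitoneOn (fun x => (Real.log x) ^ m / x) (Set.Icc ((8:ℕ):ℝ) ((K:ℕ):ℝ)) := by
    apply (antitoneOn_logpow_div m hm).mono
    intro x hx
    have := hx.1
    simp only [Nat.cast_ofNat] at this
    exact this
  have h1 := hf.sum_le_integral_Ico hK
  have h2 : (∫ x in ((8:ℕ):ℝ)..((K:ℕ):ℝ), (Real.log x) ^ m / x)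
      = (Real.log K) ^ (m+1) / (m+1) - (Real.log 8) ^ (m+1) / (m+1) := by
    rw [show ((8:ℕ):ℝ) = (8:ℝ) by norm_num]
    exact integral_logpow m (by norm_num) hKr
  rw [h2] at h1
  have hsplit : Aseq m K = (∑ i ∈ Finset.Icc 1 8, (Real.log (i:ℕ)) ^ m / (i:ℕ))
      + ∑ x ∈ Finset.Ico 8 K, (Real.log ((x:ℕ)+1:ℕ)) ^ m / ((x:ℕ)+1:ℕ) := by
    unfold Aseq
    have e1 : ∑ x ∈ Finset.Ico 8 K, (Real.log ((x+1:ℕ))) ^ m / ((x+1:ℕ))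
        = ∑ y ∈ Finset.Ico 9 (K+1), (Real.log (y:ℕ)) ^ m / ((y:ℕ)) := by
      rw [← Finset.sum_Ico_add (fun y : ℕ => (Real.log (y:ℕ)) ^ m / ((y:ℕ):ℝ)) 8 K 1]
      apply Finset.sum_congr rfl
      intro x _
      norm_num [add_comm]
    rw [e1]
    have e2 : Finset.Icc 1 K = Finset.Icc 1 8 ∪ Finset.Ico 9 (K+1) := by
      ext x
      simp only [Finset.mem_Icc, Finset.mem_union, Finset.mem_Ico]
      omega
    rw [e2, Finset.sum_union (by
      rw [Finset.disjoint_left]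
      intro x hx hx'
      simp only [Finset.mem_Icc] at hx
      simp only [Finset.mem_Ico] at hx'
      omega)]
  rw [hsplit]
  have := h1
  push_cast at this ⊢
  linarith

lemma tendsto_logpow_atTop (m : ℕ) :
    Tendsto (fun K : ℕ => (Real.log K) ^ (m+1)) atTop atTop :=
  (tendsto_pow_atTop (Nat.succ_ne_zero m)).comp
    (Real.tendsto_log_atTop.comp tendsto_natCast_atTop_atTop)

lemma tendsto_Aseq (m : ℕ) (hm : m ≤ 2) :
    Tendsto (fun K : ℕ => Aseq m K / (Real.log K) ^ (m+1)) atTop (nhds (1/((m:ℝ)+1))) := by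
  set c8 : ℝ := (Real.log 8) ^ (m+1) / (m+1) with hc8
  set D : ℝ := ∑ i ∈ Finset.Icc 1 8, (Real.log (i:ℕ)) ^ m / (i:ℕ) with hD
  have hlog := tendsto_logpow_atTop m
  have hzero : ∀ c : ℝ, Tendsto (fun K : ℕ => c / (Real.log K) ^ (m+1)) atTop (nhds 0) :=
    fun c => Tendsto.div_atTop tendsto_const_nhds hlog
  have hlow : Tendsto (fun K : ℕ => 1/((m:ℝ)+1) + (-c8) / (Real.log K) ^ (m+1)) atTop
      (nhds (1/((m:ℝ)+1))) := by
    have h := Tendsto.add (tendsto_const_nhds : Tendsto (fun _ : ℕ => 1/((m:ℝ)+1)) atTop (nhds (1/((m:ℝ)+1)))) (hzero (-c8))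
    simpa using h
  have hup : Tendsto (fun K : ℕ => 1/((m:ℝ)+1) + (D - c8) / (Real.log K) ^ (m+1)) atTop
      (nhds (1/((m:ℝ)+1))) := by
    have h := Tendsto.add (tendsto_const_nhds : Tendsto (fun _ : ℕ => 1/((m:ℝ)+1)) atTop (nhds (1/((m:ℝ)+1)))) (hzero (D - c8))
    simpa using h
  apply tendsto_of_tendsto_of_tendsto_of_le_of_le' hlow hup
  · filter_upwards [eventually_ge_atTop 8] with K hK
    have hKr : (8:ℝ) ≤ (K:ℝ) := by exact_mod_cast hK
    have h2log : (2:ℝ) ≤ Real.log 8 := by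
      rw [show (8:ℝ) = 2^3 by norm_num, Real.log_pow]
      have := Real.log_two_gt_d9
      norm_num; linarith
    have hlogK : (0:ℝ) < Real.log K := by
      have := Real.log_le_log (by norm_num : (0:ℝ) < 8) hKr
      linarith
    have hP : (0:ℝ) < (Real.log K) ^ (m+1) := pow_pos hlogK _
    have hl := Aseq_lower m hm hK
    have key : 1/((m:ℝ)+1) + (-c8) / (Real.log K) ^ (m+1)
        = ((Real.log K) ^ (m+1)/((m:ℝ)+1) - c8) / (Real.log K) ^ (m+1) := by
      rw [hc8]; field_simp; ring
    rw [key]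
    exact (div_le_div_iff_of_pos_right hP).mpr hl
  · filter_upwards [eventually_ge_atTop 8] with K hK
    have hKr : (8:ℝ) ≤ (K:ℝ) := by exact_mod_cast hK
    have h2log : (2:ℝ) ≤ Real.log 8 := by
      rw [show (8:ℝ) = 2^3 by norm_num, Real.log_pow]
      have := Real.log_two_gt_d9
      norm_num; linarith
    have hlogK : (0:ℝ) < Real.log K := by
      have := Real.log_le_log (by norm_num : (0:ℝ) < 8) hKr
      linarith
    have hP : (0:ℝ) < (Real.log K) ^ (m+1) := pow_pos hlogK _
    have hu := Aseq_upper m hm hK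
    have key : 1/((m:ℝ)+1) + (D - c8) / (Real.log K) ^ (m+1)
        = (D + ((Real.log K) ^ (m+1)/((m:ℝ)+1) - c8)) / (Real.log K) ^ (m+1) := by
      rw [hc8]; field_simp; ring
    rw [key]
    exact (div_le_div_iff_of_pos_right hP).mpr hu

lemma harmonicC_pos {K : ℕ} (hK : 1 ≤ K) : 0 < harmonicC K := by
  apply Finset.sum_pos
  · intro i hi
    simp only [Finset.mem_Icc] at hi
    have : (0:ℝ) < (i:ℝ) := by exact_mod_cast hi.1
    positivity
  · exact ⟨1, by simp [hK]⟩

lemma harmonicC_eq_Aseq (K : ℕ) : harmonicC K = Aseq 0 K := by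
  unfold harmonicC Aseq
  exact Finset.sum_congr rfl fun i _ => by rw [pow_zero]

lemma zipfVar_eq {K : ℕ} (hK : 1 ≤ K) :
    zipfVar K = Aseq 2 K / harmonicC K - (Aseq 1 K / harmonicC K) ^ 2 := by
  set C := harmonicC K with hCdef
  have hC : 0 < C := harmonicC_pos hK
  have hlogp : ∀ i ∈ Finset.Icc 1 K, Real.log (zipfP K i) = -(Real.log C + Real.log i) := by
    intro i hi
    simp only [Finset.mem_Icc] at hi
    have hi0 : ((i:ℝ)) ≠ 0 := by
      have : (0:ℝ) < (i:ℝ) := by exact_mod_cast hi.1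
      exact this.ne'
    rw [zipfP, Real.log_inv, Real.log_mul hC.ne' hi0]
  have hS2 : ∑ i ∈ Finset.Icc 1 K, zipfP K i * (Real.log (zipfP K i)) ^ 2
      = ∑ i ∈ Finset.Icc 1 K, C⁻¹ * ((Real.log C)^2 * ((1:ℝ)/(i:ℝ))
          + 2 * Real.log C * ((Real.log i)^1/(i:ℝ)) + (Real.log i)^2/(i:ℝ)) := by
    apply Finset.sum_congr rfl
    intro i hi
    rw [hlogp i hi]
    simp only [Finset.mem_Icc] at hi
    have hi0 : (0:ℝ) < (i:ℝ) := by exact_mod_cast hi.1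
    rw [zipfP, ← hCdef]
    field_simp
    ring
  have hexp2 : ∑ i ∈ Finset.Icc 1 K, C⁻¹ * ((Real.log C)^2 * ((1:ℝ)/(i:ℝ))
          + 2 * Real.log C * ((Real.log i)^1/(i:ℝ)) + (Real.log i)^2/(i:ℝ))
      = C⁻¹ * ((Real.log C)^2 * harmonicC K + 2 * Real.log C * Aseq 1 K + Aseq 2 K) := by
    rw [← Finset.mul_sum, Finset.sum_add_distrib, Finset.sum_add_distrib,
      ← Finset.mul_sum, ← Finset.mul_sum]
    rfl
  have hS1 : ∑ i ∈ Finset.Icc 1 K, zipfP K i * Real.log (zipfP K i)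
      = ∑ i ∈ Finset.Icc 1 K, -(C⁻¹ * (Real.log C * ((1:ℝ)/(i:ℝ)) + (Real.log i)^1/(i:ℝ))) := by
    apply Finset.sum_congr rfl
    intro i hi
    rw [hlogp i hi]
    simp only [Finset.mem_Icc] at hi
    have hi0 : (0:ℝ) < (i:ℝ) := by exact_mod_cast hi.1
    rw [zipfP, ← hCdef]
    field_simp
  have hexp1 : ∑ i ∈ Finset.Icc 1 K, -(C⁻¹ * (Real.log C * ((1:ℝ)/(i:ℝ)) + (Real.log i)^1/(i:ℝ)))
      = -(C⁻¹ * (Real.log C * harmonicC K + Aseq 1 K)) := by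
    rw [Finset.sum_neg_distrib, ← Finset.mul_sum, Finset.sum_add_distrib, ← Finset.mul_sum]
    rfl
  rw [zipfVar, hS2, hexp2, hS1, hexp1, ← hCdef]
  field_simp
  ring

/-- For the Zipf distribution, `σ_K² ∼ (ln K)²/12` as `K → ∞`. -/
theorem zipf_variance_asymptotics :
    Tendsto (fun K : ℕ => zipfVar K / (Real.log (K : ℝ)) ^ 2) atTop (nhds (1 / 12)) := by
  have hC : Tendsto (fun K : ℕ => harmonicC K / (Real.log K) ^ 1) atTop (nhds 1) := by
    have h := tendsto_Aseq 0 (by norm_num)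
    norm_num at h
    have he : (fun K : ℕ => harmonicC K / (Real.log K) ^ 1)
        = fun K : ℕ => Aseq 0 K / (Real.log K) ^ 1 := by
      funext K; rw [harmonicC_eq_Aseq]
    rw [he]
    simpa using h
  have h1 := tendsto_Aseq 1 (by norm_num)
  have h2 := tendsto_Aseq 2 (by norm_num)
  norm_num at h1 h2
  have hmain : Tendsto (fun K : ℕ =>
      (Aseq 2 K / (Real.log K) ^ 3) / (harmonicC K / (Real.log K) ^ 1)
        - ((Aseq 1 K / (Real.log K) ^ 2) / (harmonicC K / (Real.log K) ^ 1)) ^ 2)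
      atTop (nhds ((1/3)/1 - ((1/2)/1)^2)) :=
    (h2.div hC one_ne_zero).sub ((h1.div hC one_ne_zero).pow 2)
  have hval : ((1:ℝ)/3)/1 - ((1/2)/1)^2 = 1/12 := by norm_num
  rw [hval] at hmain
  apply hmain.congr'
  filter_upwards [eventually_ge_atTop 8] with K hK
  have hK1 : 1 ≤ K := by omega
  have hKr : (8:ℝ) ≤ (K:ℝ) := by exact_mod_cast hK
  have hCpos := harmonicC_pos hK1
  have h2log : (2:ℝ) ≤ Real.log 8 := by
    rw [show (8:ℝ) = 2^3 by norm_num, Real.log_pow]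
    have := Real.log_two_gt_d9
    norm_num; linarith
  have hlogK : (0:ℝ) < Real.log K := by
    have := Real.log_le_log (by norm_num : (0:ℝ) < 8) hKr
    linarith
  rw [zipfVar_eq hK1]
  field_simp
end

section
/- For each integer $K\ge 3$, let $C_K=\sum_{i=2}^{K}\frac{1}{i\ln i}$ and consider the distribution $p_K(i)=(C_K\, i\ln i)^{-1}$ for $2\le i\le K$. Then the variance $\sigma_K^2=\sum_{i=2}^{K}p_K(i)\ln^2 p_K(i)-\big(\sum_{i=2}^{K}p_K(i)\ln p_K(i)\big)^2$ satisfies $\sigma_K^2 \sim \frac{1}{2}\frac{(\ln K)^2}{\ln\ln K}$ as $K\to\infty$, i.e. $\lim_{K\to\infty}\sigma_K^2\,\ln\ln K/(\ln K)^2 = 1/2$. -/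
open Filter

/-- The normalizing constant `C_K = ∑_{i=2}^K 1/(i ln i)`. -/
noncomputable def loglogC (K : ℕ) : ℝ :=
  ∑ i ∈ Finset.Icc 2 K, ((i : ℝ) * Real.log (i : ℝ))⁻¹

/-- The distribution `p_K(i) = (C_K i ln i)⁻¹`, `2 ≤ i ≤ K`. -/
noncomputable def loglogP (K i : ℕ) : ℝ := (loglogC K * (i : ℝ) * Real.log (i : ℝ))⁻¹

/-- The variance parameter `σ_K² = ∑_i p_K(i) ln² p_K(i) − (∑_i p_K(i) ln p_K(i))²`. -/
noncomputable def loglogVar (K : ℕ) : ℝ :=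
  ∑ i ∈ Finset.Icc 2 K, loglogP K i * (Real.log (loglogP K i)) ^ 2
    - (∑ i ∈ Finset.Icc 2 K, loglogP K i * Real.log (loglogP K i)) ^ 2

open Real Topology

lemma sum_le_int_helper (f : ℝ → ℝ) (a K : ℕ) (haK : a ≤ K)
    (hf : AntitoneOn f (Set.Icc (a:ℝ) (K:ℝ))) :
    ∑ i ∈ Finset.Icc a K, f i ≤ f a + ∫ x in (a:ℝ)..(K:ℝ), f x := by
  have h2 := hf.sum_le_integral_Ico haK
  have hsplit : Finset.Icc a K = insert a (Finset.Icc (a+1) K) := by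
    ext x; simp; omega
  rw [hsplit, Finset.sum_insert (by simp)]
  gcongr
  have : ∑ i ∈ Finset.Icc (a+1) K, f i = ∑ i ∈ Finset.Ico a K, f ((i:ℕ) + 1 : ℕ) := by
    rw [← Finset.Ico_add_one_right_eq_Icc]
    rw [Finset.sum_Ico_eq_sum_range, Finset.sum_Ico_eq_sum_range]
    rw [show K + 1 - (a+1) = K - a by omega]
    apply Finset.sum_congr rfl
    intro j hj
    congr 1
    push_cast
    ring
  rw [this]
  exact h2

lemma int_le_sum_helper (f : ℝ → ℝ) (a K : ℕ) (haK : a ≤ K)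
    (hf : AntitoneOn f (Set.Icc (a:ℝ) (K:ℝ))) (hfK : 0 ≤ f K) :
    (∫ x in (a:ℝ)..(K:ℝ), f x) ≤ ∑ i ∈ Finset.Icc a K, f i := by
  have h1 := hf.integral_le_sum_Ico haK
  refine h1.trans ?_
  rw [← Finset.Ico_insert_right haK, Finset.sum_insert (by simp)]
  linarith


lemma log_two_gt_half : (1/2 : ℝ) < Real.log 2 := by
  have := Real.log_two_gt_d9; linarith

lemma loglog_two_ge : (-(1/2) : ℝ) ≤ Real.log (Real.log 2) := by
  rw [Real.le_log_iff_exp_le (by positivity)]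
  have h1 : Real.exp (-(1/2)) ≤ 1 / Real.exp (1/2) := by
    rw [Real.exp_neg]; rw [inv_eq_one_div]
  have h2 : (1:ℝ) + 1/2 ≤ Real.exp (1/2) := by
    have := Real.add_one_le_exp (1/2 : ℝ); linarith
  have h3 : (1:ℝ)/Real.exp (1/2) ≤ 1/(3/2) := by
    apply div_le_div_of_nonneg_left (by norm_num) (by norm_num) (by linarith)
  have := Real.log_two_gt_d9
  calc Real.exp (-(1/2)) ≤ 1/(3/2) := h1.trans h3
    _ ≤ Real.log 2 := by norm_num; linarith

lemma log_three_gt_one : (1:ℝ) < Real.log 3 := by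
  rw [show (1:ℝ) = Real.log (Real.exp 1) by simp]
  apply Real.log_lt_log (Real.exp_pos 1)
  have := Real.exp_one_lt_d9; linarith

lemma integral_inv_mul_log {K : ℝ} (hK : 2 ≤ K) :
    ∫ x in (2:ℝ)..K, (x * Real.log x)⁻¹
      = Real.log (Real.log K) - Real.log (Real.log 2) := by
  have hsub : Set.uIcc (2:ℝ) K ⊆ Set.Ici 2 := by
    rw [Set.uIcc_of_le hK]; exact Set.Icc_subset_Ici_self
  have hlogpos : ∀ x ∈ Set.uIcc (2:ℝ) K, 0 < Real.log x := fun x hx => by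
    have : (2:ℝ) ≤ x := hsub hx
    calc (0:ℝ) < 1/2 := by norm_num
      _ < Real.log 2 := log_two_gt_half
      _ ≤ Real.log x := Real.log_le_log (by norm_num) this
  apply intervalIntegral.integral_eq_sub_of_hasDerivAt
  · intro x hx
    have hx2 : (2:ℝ) ≤ x := hsub hx
    have hx0 : x ≠ 0 := by linarith
    have hl := hlogpos x hx
    have := (Real.hasDerivAt_log hx0).log hl.ne'
    convert this using 1
    all_goals first | rfl | ring
  · apply ContinuousOn.intervalIntegrable
    apply ContinuousOn.inv₀
    · exact continuousOn_id.mul (Real.continuousOn_log.mono (fun x hx => by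
        simp only [Set.mem_compl_iff, Set.mem_singleton_iff]
        have : (2:ℝ) ≤ x := hsub hx; intro h; rw [h] at this; norm_num at this))
    · intro x hx
      have : (2:ℝ) ≤ x := hsub hx
      exact (mul_pos (by linarith) (hlogpos x hx)).ne'


lemma integral_inv' {K : ℝ} (hK : 2 ≤ K) :
    ∫ x in (2:ℝ)..K, x⁻¹ = Real.log K - Real.log 2 := by
  rw [integral_inv (by rw [Set.uIcc_of_le hK]; intro h; exact absurd h.1 (by norm_num))]
  rw [Real.log_div (by linarith) (by norm_num)]

lemma integral_log_div {K : ℝ} (hK : 3 ≤ K) :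
    ∫ x in (3:ℝ)..K, Real.log x / x
      = (Real.log K)^2/2 - (Real.log 3)^2/2 := by
  have hsub : Set.uIcc (3:ℝ) K ⊆ Set.Ici 3 := by
    rw [Set.uIcc_of_le hK]; exact Set.Icc_subset_Ici_self
  apply intervalIntegral.integral_eq_sub_of_hasDerivAt
  · intro x hx
    have hx3 : (3:ℝ) ≤ x := hsub hx
    have hx0 : x ≠ 0 := by linarith
    have := ((Real.hasDerivAt_log hx0).pow 2).div_const 2
    convert this using 1
    all_goals first | rfl | (simp only [Nat.cast_ofNat, Nat.reduceSub, pow_one]; ring)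
  · apply ContinuousOn.intervalIntegrable
    apply ContinuousOn.div
    · exact Real.continuousOn_log.mono (fun x hx => by
        simp only [Set.mem_compl_iff, Set.mem_singleton_iff]
        have : (3:ℝ) ≤ x := hsub hx; intro h; rw [h] at this; norm_num at this)
    · exact continuousOn_id
    · intro x hx; have : (3:ℝ) ≤ x := hsub hx; intro h; rw [h] at this; norm_num at this

lemma antitoneOn_inv_mul_log {K : ℝ} :
    AntitoneOn (fun x => (x * Real.log x)⁻¹) (Set.Icc (2:ℝ) K) := by
  intro x hx y hy hxy
  have hx2 := hx.1
  have hlx : (0:ℝ) < Real.log x := Real.log_pos (by linarith)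
  have hly : (0:ℝ) < Real.log y := Real.log_pos (by linarith)
  apply inv_anti₀ (by positivity)
  exact mul_le_mul hxy (Real.log_le_log (by linarith) hxy) hlx.le (by linarith)

lemma antitoneOn_inv' {K : ℝ} : AntitoneOn (fun x : ℝ => x⁻¹) (Set.Icc (2:ℝ) K) := by
  intro x hx y hy hxy
  exact inv_anti₀ (by linarith [hx.1]) hxy

lemma antitoneOn_log_div {K : ℝ} :
    AntitoneOn (fun x => Real.log x / x) (Set.Icc (3:ℝ) K) := by
  intro x hx y hy hxy
  have hx3 := hx.1
  have hx0 : (0:ℝ) < x := by linarith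
  have hy0 : (0:ℝ) < y := by linarith
  have hlx : (1:ℝ) ≤ Real.log x := le_of_lt (lt_of_lt_of_le log_three_gt_one
    (Real.log_le_log (by norm_num) hx3))
  have hle : Real.log y ≤ Real.log x + (y - x) / x := by
    have h := Real.log_le_sub_one_of_pos (div_pos hy0 hx0)
    have : Real.log (y/x) = Real.log y - Real.log x := Real.log_div hy0.ne' hx0.ne'
    rw [this] at h
    have : y / x - 1 = (y - x)/x := by field_simp
    linarith [this ▸ h]
  rw [div_le_div_iff₀ hy0 hx0]
  have key : Real.log x * x + (y - x) ≤ Real.log x * y := by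
    nlinarith [sub_nonneg.mpr hxy]
  have : Real.log y * x ≤ (Real.log x + (y-x)/x) * x := by nlinarith
  calc Real.log y * x ≤ (Real.log x + (y-x)/x) * x := this
    _ = Real.log x * x + (y - x) := by field_simp
    _ ≤ Real.log x * y := key


noncomputable def BB (K : ℕ) : ℝ := ∑ i ∈ Finset.Icc 2 K, ((i:ℝ))⁻¹
noncomputable def DD (K : ℕ) : ℝ := ∑ i ∈ Finset.Icc 2 K, Real.log (i:ℝ) / (i:ℝ)

lemma loglogC_bounds {K : ℕ} (hK : 2 ≤ K) :
    Real.log (Real.log K) - Real.log (Real.log 2) ≤ loglogC K ∧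
    loglogC K ≤ (2 * Real.log 2)⁻¹ + (Real.log (Real.log K) - Real.log (Real.log 2)) := by
  have hK2 : (2:ℝ) ≤ (K:ℝ) := by exact_mod_cast hK
  have hcast : ((2:ℕ):ℝ) = (2:ℝ) := by norm_num
  have hanti : AntitoneOn (fun x => (x * Real.log x)⁻¹) (Set.Icc ((2:ℕ):ℝ) (K:ℝ)) := by
    rw [hcast]; exact antitoneOn_inv_mul_log
  have hKpos : (0:ℝ) ≤ ((K:ℝ) * Real.log (K:ℝ))⁻¹ := by
    have : (0:ℝ) < Real.log K := Real.log_pos (by linarith)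
    positivity
  have h1 := int_le_sum_helper _ 2 K hK hanti hKpos
  have h2 := sum_le_int_helper _ 2 K hK hanti
  rw [hcast] at h1 h2
  rw [integral_inv_mul_log hK2] at h1 h2
  constructor
  · exact le_trans (le_of_eq rfl) h1
  · refine h2.trans (le_of_eq ?_)
    norm_num

lemma BB_bounds {K : ℕ} (hK : 2 ≤ K) :
    Real.log K - Real.log 2 ≤ BB K ∧ BB K ≤ 2⁻¹ + (Real.log K - Real.log 2) := by
  have hK2 : (2:ℝ) ≤ (K:ℝ) := by exact_mod_cast hK
  have hcast : ((2:ℕ):ℝ) = (2:ℝ) := by norm_num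
  have hanti : AntitoneOn (fun x : ℝ => x⁻¹) (Set.Icc ((2:ℕ):ℝ) (K:ℝ)) := by
    rw [hcast]; exact antitoneOn_inv'
  have h1 := int_le_sum_helper _ 2 K hK hanti (by positivity)
  have h2 := sum_le_int_helper _ 2 K hK hanti
  rw [hcast] at h1 h2
  rw [integral_inv' hK2] at h1 h2
  exact ⟨h1, by unfold BB; simpa using h2⟩

lemma DD_bounds {K : ℕ} (hK : 3 ≤ K) :
    (Real.log K)^2/2 - (Real.log 3)^2/2 ≤ DD K ∧
    DD K ≤ (Real.log 2/2 + Real.log 3/3 + (Real.log K)^2/2 - (Real.log 3)^2/2) := by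
  have hK3 : (3:ℝ) ≤ (K:ℝ) := by exact_mod_cast hK
  have hcast : ((3:ℕ):ℝ) = (3:ℝ) := by norm_num
  have hsplit : DD K = Real.log 2 / 2 + ∑ i ∈ Finset.Icc 3 K, Real.log (i:ℝ) / (i:ℝ) := by
    unfold DD
    rw [show Finset.Icc 2 K = insert 2 (Finset.Icc 3 K) by ext x; simp; omega,
      Finset.sum_insert (by simp)]
    norm_num
  have hanti : AntitoneOn (fun x : ℝ => Real.log x / x) (Set.Icc ((3:ℕ):ℝ) (K:ℝ)) := by
    rw [hcast]; exact antitoneOn_log_div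
  have hlogK : (0:ℝ) < Real.log K := Real.log_pos (by linarith)
  have h1 := int_le_sum_helper _ 3 K hK hanti (by positivity)
  have h2 := sum_le_int_helper _ 3 K hK hanti
  rw [hcast] at h1 h2
  rw [integral_log_div hK3] at h1 h2
  have hl2 : (0:ℝ) < Real.log 2 := by linarith [log_two_gt_half]
  constructor
  · rw [hsplit]; linarith
  · rw [hsplit]
    linarith


lemma tendsto_div_of_bounded_diff (S h : ℕ → ℝ) (c a b : ℝ)
    (hh : Tendsto h atTop atTop)
    (hb : ∀ᶠ K in atTop, c * h K + a ≤ S K ∧ S K ≤ c * h K + b) :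
    Tendsto (fun K => S K / h K) atTop (𝓝 c) := by
  have hinv : Tendsto (fun K => (h K)⁻¹) atTop (𝓝 0) :=
    tendsto_inv_atTop_zero.comp hh
  apply tendsto_of_tendsto_of_tendsto_of_le_of_le'
    (g := fun K => c + a * (h K)⁻¹) (h := fun K => c + b * (h K)⁻¹)
  · have : Tendsto (fun K => c + a * (h K)⁻¹) atTop (𝓝 (c + a * 0)) :=
      tendsto_const_nhds.add (tendsto_const_nhds.mul hinv)
    simpa using this
  · have : Tendsto (fun K => c + b * (h K)⁻¹) atTop (𝓝 (c + b * 0)) :=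
      tendsto_const_nhds.add (tendsto_const_nhds.mul hinv)
    simpa using this
  · filter_upwards [hb, hh.eventually_gt_atTop 0] with K hK hKpos
    have : c + a * (h K)⁻¹ = (c * h K + a) / h K := by field_simp
    rw [this]
    exact (div_le_div_iff_of_pos_right hKpos).mpr hK.1
  · filter_upwards [hb, hh.eventually_gt_atTop 0] with K hK hKpos
    have : c + b * (h K)⁻¹ = (c * h K + b) / h K := by field_simp
    rw [this]
    exact (div_le_div_iff_of_pos_right hKpos).mpr hK.2


noncomputable def MM (K : ℕ) : ℝ := Real.log K
noncomputable def LL (K : ℕ) : ℝ := Real.log (Real.log K)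

lemma hM : Tendsto MM atTop atTop :=
  Real.tendsto_log_atTop.comp tendsto_natCast_atTop_atTop
lemma hL : Tendsto LL atTop atTop :=
  Real.tendsto_log_atTop.comp hM

lemma tMinv : Tendsto (fun K => (MM K)⁻¹) atTop (𝓝 0) := tendsto_inv_atTop_zero.comp hM

lemma tLM : Tendsto (fun K => LL K / MM K) atTop (𝓝 0) := by
  have := (Real.tendsto_pow_log_div_mul_add_atTop 1 0 1 one_ne_zero).comp hM
  refine this.congr fun K => ?_
  simp [LL, MM, Function.comp]

lemma tL3M2 : Tendsto (fun K => LL K ^ 3 / MM K ^ 2) atTop (𝓝 0) := by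
  have h1 := (Real.tendsto_pow_log_div_mul_add_atTop 1 0 3 one_ne_zero).comp hM
  have := h1.mul tMinv
  rw [mul_zero] at this
  refine this.congr fun K => ?_
  simp only [Function.comp, LL, MM]
  ring

lemma tB : Tendsto (fun K => BB K / MM K) atTop (𝓝 1) := by
  apply tendsto_div_of_bounded_diff _ _ 1 (-Real.log 2) (2⁻¹ - Real.log 2) hM
  filter_upwards [eventually_ge_atTop 2] with K hK
  obtain ⟨h1, h2⟩ := BB_bounds hK
  unfold MM
  constructor <;> [linarith; linarith]

lemma tC : Tendsto (fun K => loglogC K / LL K) atTop (𝓝 1) := by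
  apply tendsto_div_of_bounded_diff _ _ 1 (-Real.log (Real.log 2))
    ((2*Real.log 2)⁻¹ - Real.log (Real.log 2)) hL
  filter_upwards [eventually_ge_atTop 2] with K hK
  obtain ⟨h1, h2⟩ := loglogC_bounds hK
  unfold LL
  constructor <;> [linarith; linarith]

lemma tD : Tendsto (fun K => DD K / MM K ^ 2) atTop (𝓝 (1/2)) := by
  apply tendsto_div_of_bounded_diff _ _ (1/2) (-(Real.log 3)^2/2)
    (Real.log 2/2 + Real.log 3/3 - (Real.log 3)^2/2)
    ((tendsto_pow_atTop two_ne_zero).comp hM)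
  filter_upwards [eventually_ge_atTop 3] with K hK
  obtain ⟨h1, h2⟩ := DD_bounds hK
  simp only [Function.comp, MM]
  constructor <;> [linarith; linarith]

lemma tLC : Tendsto (fun K => LL K / loglogC K) atTop (𝓝 1) := by
  have := tC.inv₀ one_ne_zero
  rw [inv_one] at this
  refine this.congr fun K => ?_
  rw [inv_div]

lemma tCatTop : Tendsto (fun K => loglogC K) atTop atTop := by
  apply tendsto_atTop_mono' _ _ (tendsto_atTop_add_const_right _ (-Real.log (Real.log 2)) hL)
  filter_upwards [eventually_ge_atTop 2] with K hK
  have := (loglogC_bounds hK).1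
  unfold LL; linarith

lemma tCinv : Tendsto (fun K => (loglogC K)⁻¹) atTop (𝓝 0) :=
  tendsto_inv_atTop_zero.comp tCatTop


noncomputable def Xf (i : ℕ) : ℝ := Real.log (i:ℝ) + Real.log (Real.log (i:ℝ))

lemma var_shift (s : Finset ℕ) (w x : ℕ → ℝ) (c : ℝ) (hw : ∑ i ∈ s, w i = 1) :
    ∑ i ∈ s, w i * (c + x i)^2 - (∑ i ∈ s, w i * (c + x i))^2
      = ∑ i ∈ s, w i * x i ^2 - (∑ i ∈ s, w i * x i)^2 := by
  have e1 : ∑ i ∈ s, w i * (c + x i)^2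
      = c^2 * ∑ i ∈ s, w i + 2*c*∑ i ∈ s, (w i * x i) + ∑ i ∈ s, (w i * x i^2) := by
    rw [Finset.mul_sum, Finset.mul_sum, ← Finset.sum_add_distrib, ← Finset.sum_add_distrib]
    exact Finset.sum_congr rfl fun i _ => by ring
  have e2 : ∑ i ∈ s, w i * (c + x i)
      = c * ∑ i ∈ s, w i + ∑ i ∈ s, (w i * x i) := by
    rw [Finset.mul_sum, ← Finset.sum_add_distrib]
    exact Finset.sum_congr rfl fun i _ => by ring
  rw [e1, e2, hw]; ring

lemma var_bounds {K : ℕ} (hK : 3 ≤ K) :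
    (loglogC K)⁻¹ * DD K - (loglogC K)⁻¹ * BB K - ((loglogC K)⁻¹ * BB K + LL K)^2
        ≤ loglogVar K ∧
    loglogVar K ≤ (loglogC K)⁻¹ * DD K + 2 * LL K * ((loglogC K)⁻¹ * BB K) + LL K ^ 2 := by
  set s := Finset.Icc 2 K with hs
  have hmem : ∀ i ∈ s, (2:ℝ) ≤ (i:ℝ) ∧ (i:ℝ) ≤ (K:ℝ) := by
    intro i hi
    rw [hs, Finset.mem_Icc] at hi
    exact ⟨by exact_mod_cast hi.1, by exact_mod_cast hi.2⟩
  have hlogi : ∀ i ∈ s, 0 < Real.log (i:ℝ) := fun i hi =>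
    Real.log_pos (by linarith [(hmem i hi).1])
  have hlog2 : (0:ℝ) < Real.log 2 := by linarith [log_two_gt_half]
  have hlogi_half : ∀ i ∈ s, 2⁻¹ ≤ Real.log (i:ℝ) := fun i hi => by
    have := Real.log_le_log (by norm_num) (hmem i hi).1
    have := log_two_gt_half
    linarith
  have hCpos : 0 < loglogC K := by
    apply Finset.sum_pos
    · intro i hi
      have := (hmem i hi).1
      have := hlogi i hi
      positivity
    · exact ⟨2, by simp only [Finset.mem_Icc]; omega⟩
  have hppos : ∀ i ∈ s, 0 < loglogP K i := by
    intro i hi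
    have h1 := (hmem i hi).1
    have h2 := hlogi i hi
    unfold loglogP
    positivity
  -- p sums to 1
  have hsum1 : ∑ i ∈ s, loglogP K i = 1 := by
    have : ∀ i ∈ s, loglogP K i = (loglogC K)⁻¹ * ((i:ℝ) * Real.log (i:ℝ))⁻¹ := by
      intro i hi
      unfold loglogP
      rw [mul_assoc, mul_inv]
    rw [Finset.sum_congr rfl this, ← Finset.mul_sum]
    exact inv_mul_cancel₀ hCpos.ne'
  -- log p
  have hlogp : ∀ i ∈ s, Real.log (loglogP K i) = -(Real.log (loglogC K) + Xf i) := by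
    intro i hi
    have h1 := (hmem i hi).1
    have h2 := hlogi i hi
    unfold loglogP
    rw [Real.log_inv, Real.log_mul (by positivity) h2.ne', Real.log_mul hCpos.ne' (by positivity)]
    simp [Xf, add_assoc]
  -- identity
  have hvar : loglogVar K = ∑ i ∈ s, loglogP K i * Xf i ^ 2
      - (∑ i ∈ s, loglogP K i * Xf i)^2 := by
    unfold loglogVar
    rw [← hs]
    have e1 : ∀ i ∈ s, loglogP K i * (Real.log (loglogP K i))^2
        = loglogP K i * (Real.log (loglogC K) + Xf i)^2 := by
      intro i hi; rw [hlogp i hi, neg_sq]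
    have e2 : ∀ i ∈ s, loglogP K i * Real.log (loglogP K i)
        = -(loglogP K i * (Real.log (loglogC K) + Xf i)) := by
      intro i hi; rw [hlogp i hi, mul_neg]
    rw [Finset.sum_congr rfl e1, Finset.sum_congr rfl e2, Finset.sum_neg_distrib, neg_sq]
    exact var_shift s _ Xf (Real.log (loglogC K)) hsum1
  -- X bounds
  have hXub : ∀ i ∈ s, Xf i ≤ Real.log (i:ℝ) + LL K := by
    intro i hi
    have : Real.log (Real.log (i:ℝ)) ≤ LL K := by
      apply Real.log_le_log (hlogi i hi)
      exact Real.log_le_log (by linarith [(hmem i hi).1]) (hmem i hi).2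
    simp only [Xf]; linarith
  have hXlb : ∀ i ∈ s, Real.log (i:ℝ) - 2⁻¹ ≤ Xf i := by
    intro i hi
    have : Real.log (Real.log 2) ≤ Real.log (Real.log (i:ℝ)) :=
      Real.log_le_log hlog2 (Real.log_le_log (by norm_num) (hmem i hi).1)
    have := loglog_two_ge
    simp only [Xf]; linarith
  have hXpos : ∀ i ∈ s, 0 ≤ Xf i := by
    intro i hi
    have := hXlb i hi
    have := hlogi_half i hi
    linarith
  -- sum computations
  have hS2sum : ∑ i ∈ s, loglogP K i * (Real.log (i:ℝ))^2 = (loglogC K)⁻¹ * DD K := by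
    unfold DD; rw [← hs, Finset.mul_sum]
    apply Finset.sum_congr rfl
    intro i hi
    have h1 := (hmem i hi).1
    have h2 := hlogi i hi
    unfold loglogP
    have hi0 : (i:ℝ) ≠ 0 := by linarith
    field_simp
  have hS1sum : ∑ i ∈ s, loglogP K i * Real.log (i:ℝ) = (loglogC K)⁻¹ * BB K := by
    unfold BB; rw [← hs, Finset.mul_sum]
    apply Finset.sum_congr rfl
    intro i hi
    have h1 := (hmem i hi).1
    have h2 := hlogi i hi
    unfold loglogP
    have hi0 : (i:ℝ) ≠ 0 := by linarith
    field_simp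
  -- S2 upper
  have hS2ub : ∑ i ∈ s, loglogP K i * Xf i ^ 2
      ≤ (loglogC K)⁻¹ * DD K + 2 * LL K * ((loglogC K)⁻¹ * BB K) + LL K ^ 2 := by
    have step1 : ∑ i ∈ s, loglogP K i * Xf i ^ 2
        ≤ ∑ i ∈ s, loglogP K i * (Real.log (i:ℝ) + LL K)^2 := by
      apply Finset.sum_le_sum
      intro i hi
      exact mul_le_mul_of_nonneg_left
        (pow_le_pow_left₀ (hXpos i hi) (hXub i hi) 2) (hppos i hi).le
    have step2 : ∑ i ∈ s, loglogP K i * (Real.log (i:ℝ) + LL K)^2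
        = ∑ i ∈ s, loglogP K i * (Real.log (i:ℝ))^2
          + 2 * LL K * ∑ i ∈ s, loglogP K i * Real.log (i:ℝ)
          + LL K ^2 * ∑ i ∈ s, loglogP K i := by
      rw [Finset.mul_sum, Finset.mul_sum, ← Finset.sum_add_distrib, ← Finset.sum_add_distrib]
      exact Finset.sum_congr rfl fun i _ => by ring
    rw [step2, hsum1, hS2sum, hS1sum] at step1
    linarith
  -- S2 lower
  have hS2lb : (loglogC K)⁻¹ * DD K - (loglogC K)⁻¹ * BB K
      ≤ ∑ i ∈ s, loglogP K i * Xf i ^ 2 := by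
    have step1 : ∑ i ∈ s, loglogP K i * ((Real.log (i:ℝ))^2 - Real.log (i:ℝ))
        ≤ ∑ i ∈ s, loglogP K i * Xf i ^ 2 := by
      apply Finset.sum_le_sum
      intro i hi
      apply mul_le_mul_of_nonneg_left _ (hppos i hi).le
      have h1 : (Real.log (i:ℝ) - 2⁻¹)^2 ≤ Xf i ^2 :=
        pow_le_pow_left₀ (by linarith [hlogi_half i hi]) (hXlb i hi) 2
      nlinarith [h1]
    have step2 : ∑ i ∈ s, loglogP K i * ((Real.log (i:ℝ))^2 - Real.log (i:ℝ))
        = ∑ i ∈ s, loglogP K i * (Real.log (i:ℝ))^2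
          - ∑ i ∈ s, loglogP K i * Real.log (i:ℝ) := by
      rw [← Finset.sum_sub_distrib]
      exact Finset.sum_congr rfl fun i _ => by ring
    rw [step2, hS2sum, hS1sum] at step1
    linarith
  -- S1 bounds
  have hS1nn : 0 ≤ ∑ i ∈ s, loglogP K i * Xf i :=
    Finset.sum_nonneg fun i hi => mul_nonneg (hppos i hi).le (hXpos i hi)
  have hS1ub : ∑ i ∈ s, loglogP K i * Xf i ≤ (loglogC K)⁻¹ * BB K + LL K := by
    have step1 : ∑ i ∈ s, loglogP K i * Xf i
        ≤ ∑ i ∈ s, loglogP K i * (Real.log (i:ℝ) + LL K) := by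
      apply Finset.sum_le_sum
      intro i hi
      exact mul_le_mul_of_nonneg_left (hXub i hi) (hppos i hi).le
    have step2 : ∑ i ∈ s, loglogP K i * (Real.log (i:ℝ) + LL K)
        = ∑ i ∈ s, loglogP K i * Real.log (i:ℝ) + LL K * ∑ i ∈ s, loglogP K i := by
      rw [Finset.mul_sum, ← Finset.sum_add_distrib]
      exact Finset.sum_congr rfl fun i _ => by ring
    rw [step2, hsum1, hS1sum] at step1
    linarith
  have hS1sq : (∑ i ∈ s, loglogP K i * Xf i)^2 ≤ ((loglogC K)⁻¹ * BB K + LL K)^2 :=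
    pow_le_pow_left₀ hS1nn hS1ub 2
  constructor
  · rw [hvar]
    have := sq_nonneg (∑ i ∈ s, loglogP K i * Xf i)
    linarith
  · rw [hvar]
    have := sq_nonneg (∑ i ∈ s, loglogP K i * Xf i)
    linarith


/-- For the distribution `p_K(i) ∝ 1/(i ln i)`, `σ_K² ∼ (ln K)²/(2 ln ln K)` as `K → ∞`. -/
theorem loglog_variance_asymptotics :
    Tendsto (fun K : ℕ =>
        loglogVar K * Real.log (Real.log (K : ℝ)) / (Real.log (K : ℝ)) ^ 2)
      atTop (nhds (1 / 2)) := by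

  have tlow : Tendsto (fun K =>
      (DD K/MM K^2)*(LL K/loglogC K)
      - (BB K/MM K)*(LL K/loglogC K)*(MM K)⁻¹
      - ((BB K/MM K)^2*(LL K/loglogC K)*(loglogC K)⁻¹
         + 2*((BB K/MM K)*(LL K/loglogC K)*(LL K/MM K))
         + LL K^3/MM K^2)) atTop (𝓝 (1/2)) := by
    have h := ((tD.mul tLC).sub ((tB.mul tLC).mul tMinv)).sub
      ((((tB.pow 2).mul tLC).mul tCinv).add
        (((tB.mul tLC).mul tLM).const_mul 2 |>.add tL3M2))
    norm_num at h
    exact h.congr fun K => by ring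
  have tup : Tendsto (fun K =>
      (DD K/MM K^2)*(LL K/loglogC K)
      + 2*((BB K/MM K)*(LL K/loglogC K)*(LL K/MM K))
      + LL K^3/MM K^2) atTop (𝓝 (1/2)) := by
    have h := (tD.mul tLC).add ((((tB.mul tLC).mul tLM).const_mul 2).add tL3M2)
    norm_num at h
    exact h.congr fun K => by ring
  apply tendsto_of_tendsto_of_tendsto_of_le_of_le' tlow tup
  · filter_upwards [eventually_ge_atTop 3] with K hK
    obtain ⟨hb, -⟩ := var_bounds hK
    have hK3 : (3:ℝ) ≤ (K:ℝ) := by exact_mod_cast hK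
    have hM1 : (1:ℝ) < MM K :=
      lt_of_lt_of_le log_three_gt_one (Real.log_le_log (by norm_num) hK3)
    have hfrac : 0 ≤ LL K / MM K^2 :=
      div_nonneg (Real.log_nonneg hM1.le) (sq_nonneg _)
    calc (DD K/MM K^2)*(LL K/loglogC K)
          - (BB K/MM K)*(LL K/loglogC K)*(MM K)⁻¹
          - ((BB K/MM K)^2*(LL K/loglogC K)*(loglogC K)⁻¹
            + 2*((BB K/MM K)*(LL K/loglogC K)*(LL K/MM K))
            + LL K^3/MM K^2)
        = ((loglogC K)⁻¹ * DD K - (loglogC K)⁻¹ * BB K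
            - ((loglogC K)⁻¹ * BB K + LL K)^2) * (LL K / MM K^2) := by ring
      _ ≤ loglogVar K * (LL K / MM K^2) := mul_le_mul_of_nonneg_right hb hfrac
      _ = loglogVar K * Real.log (Real.log (K:ℝ)) / (Real.log (K:ℝ))^2 := by
          simp only [LL, MM]; ring
  · filter_upwards [eventually_ge_atTop 3] with K hK
    obtain ⟨-, hb⟩ := var_bounds hK
    have hK3 : (3:ℝ) ≤ (K:ℝ) := by exact_mod_cast hK
    have hM1 : (1:ℝ) < MM K :=
      lt_of_lt_of_le log_three_gt_one (Real.log_le_log (by norm_num) hK3)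
    have hfrac : 0 ≤ LL K / MM K^2 :=
      div_nonneg (Real.log_nonneg hM1.le) (sq_nonneg _)
    calc loglogVar K * Real.log (Real.log (K:ℝ)) / (Real.log (K:ℝ))^2
        = loglogVar K * (LL K / MM K^2) := by simp only [LL, MM]; ring
      _ ≤ ((loglogC K)⁻¹ * DD K + 2 * LL K * ((loglogC K)⁻¹ * BB K) + LL K ^ 2)
            * (LL K / MM K^2) := mul_le_mul_of_nonneg_right hb hfrac
      _ = (DD K/MM K^2)*(LL K/loglogC K)
          + 2*((BB K/MM K)*(LL K/loglogC K)*(LL K/MM K))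
          + LL K^3/MM K^2 := by ring
end

section
/- For each integer $K\ge 3$, let $C_K=\sum_{i=2}^{K}\frac{1}{i\ln i}$ and consider the distribution $p_K(i)=(C_K\, i\ln i)^{-1}$ for $2\le i\le K$. Then Shannon's entropy $H_K=-\sum_{i=2}^{K}p_K(i)\ln p_K(i)$ satisfies $H_K \sim \frac{\ln K}{\ln\ln K}$ as $K\to\infty$, i.e. $\lim_{K\to\infty} H_K\,\ln\ln K/\ln K = 1$. -/
open Filter

/-- Shannon's entropy `H_K = −∑_{i=2}^K p_K(i) ln p_K(i)`. -/
noncomputable def loglogEntropy (K : ℕ) : ℝ :=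
  -∑ i ∈ Finset.Icc 2 K, loglogP K i * Real.log (loglogP K i)

noncomputable def llS1 (K : ℕ) : ℝ := ∑ i ∈ Finset.Icc 2 K, (i : ℝ)⁻¹
noncomputable def llS2 (K : ℕ) : ℝ :=
  ∑ i ∈ Finset.Icc 2 K, ((i : ℝ) * Real.log (i : ℝ))⁻¹ * Real.log (Real.log (i : ℝ))

lemma antitoneOn_invxlogx {b : ℝ} : AntitoneOn (fun x : ℝ => (x * Real.log x)⁻¹) (Set.Icc 2 b) := by
  intro x hx y hy hxy
  have hx2 : (2:ℝ) ≤ x := hx.1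
  have hlx : 0 < Real.log x := Real.log_pos (by linarith)
  have hly : 0 < Real.log y := Real.log_pos (by linarith [hx.1, hxy])
  have h1 : 0 < x * Real.log x := by positivity
  apply inv_anti₀ h1
  exact mul_le_mul hxy (Real.log_le_log (by linarith) hxy) hlx.le (by linarith)

lemma integral_invxlogx {a b : ℝ} (ha : 2 ≤ a) (hab : a ≤ b) :
    ∫ x in a..b, (x * Real.log x)⁻¹ = Real.log (Real.log b) - Real.log (Real.log a) := by
  have key : ∀ x ∈ Set.uIcc a b, HasDerivAt (fun t => Real.log (Real.log t)) ((x * Real.log x)⁻¹) x := by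
    intro x hx
    rw [Set.uIcc_of_le hab] at hx
    have hx2 : (2:ℝ) ≤ x := le_trans ha hx.1
    have hlx : 0 < Real.log x := Real.log_pos (by linarith)
    have := (Real.hasDerivAt_log hlx.ne').comp x (Real.hasDerivAt_log (by positivity : x ≠ 0))
    rw [show (x * Real.log x)⁻¹ = (Real.log x)⁻¹ * x⁻¹ by ring]
    exact this
  apply intervalIntegral.integral_eq_sub_of_hasDerivAt key
  apply ContinuousOn.intervalIntegrable
  rw [Set.uIcc_of_le hab]
  apply ContinuousOn.inv₀
  · exact (continuousOn_id.mul (Real.continuousOn_log.mono (by intro x hx; simp; intro h; simp [h] at hx; linarith [hx.1])))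
  · intro x hx
    have hx2 : (2:ℝ) ≤ x := le_trans ha hx.1
    have hlx : 0 < Real.log x := Real.log_pos (by linarith)
    positivity

lemma loglogC_lower {K : ℕ} (hK : 2 ≤ K) :
    Real.log (Real.log K) - Real.log (Real.log 2) ≤ loglogC K := by
  have hKR : (2:ℝ) ≤ (K:ℝ) := by exact_mod_cast hK
  have this := (antitoneOn_invxlogx (b := ((K+1:ℕ):ℝ))).integral_le_sum_Ico
    (a := 2) (b := K+1) (by omega)
  rw [show (((2:ℕ)):ℝ) = (2:ℝ) by norm_num] at this
  rw [integral_invxlogx (by norm_num) (by push_cast; linarith)] at this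
  have h2 : Real.log (Real.log K) ≤ Real.log (Real.log ((K+1:ℕ):ℝ)) := by
    have := Real.log_pos (show (1:ℝ) < K by linarith)
    apply Real.log_le_log this
    apply Real.log_le_log (by linarith)
    push_cast; linarith
  rw [Finset.Ico_add_one_right_eq_Icc] at this
  unfold loglogC
  linarith

lemma loglogC_upper {K : ℕ} (hK : 2 ≤ K) :
    loglogC K ≤ (2 * Real.log 2)⁻¹ + (Real.log (Real.log K) - Real.log (Real.log 2)) := by
  have hf := (antitoneOn_invxlogx (b := (2:ℝ) + (K - 2 : ℕ))).sum_le_integral (x₀ := 2) (a := K - 2)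
  rw [integral_invxlogx le_rfl (le_add_of_nonneg_right (Nat.cast_nonneg _))] at hf
  have hsplit : loglogC K = ((2:ℝ) * Real.log 2)⁻¹ + ∑ i ∈ Finset.Icc 3 K, ((i : ℝ) * Real.log (i : ℝ))⁻¹ := by
    unfold loglogC
    rw [← Finset.sum_erase_add (Finset.Icc 2 K) _ (Finset.mem_Icc.mpr ⟨le_refl 2, hK⟩)]
    rw [show (Finset.Icc 2 K).erase 2 = Finset.Icc 3 K by
      ext x; simp only [Finset.mem_erase, Finset.mem_Icc]; omega]
    push_cast
    ring
  have hre : ∑ i ∈ Finset.Icc 3 K, ((i : ℝ) * Real.log (i : ℝ))⁻¹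
      = ∑ i ∈ Finset.range (K - 2), (((2:ℝ) + ((i+1 : ℕ):ℝ)) * Real.log ((2:ℝ) + ((i+1:ℕ):ℝ)))⁻¹ := by
    rw [← Finset.Ico_add_one_right_eq_Icc, Finset.sum_Ico_eq_sum_range,
      show K + 1 - 3 = K - 2 by omega]
    apply Finset.sum_congr rfl
    intro i _
    push_cast
    ring_nf
  have hcast : (2:ℝ) + ((K - 2 : ℕ):ℝ) = (K:ℝ) := by
    have : ((K - 2 : ℕ):ℝ) = (K:ℝ) - 2 := by
      push_cast [Nat.cast_sub hK]; ring
    rw [this]; ring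
  rw [hcast] at hf
  linarith [hsplit, hre ▸ hf]

lemma loglogC_pos {K : ℕ} (hK : 2 ≤ K) : 0 < loglogC K := by
  unfold loglogC
  apply Finset.sum_pos
  · intro i hi
    have hi2 : 2 ≤ i := (Finset.mem_Icc.mp hi).1
    have : (2:ℝ) ≤ (i:ℝ) := by exact_mod_cast hi2
    have := Real.log_pos (show (1:ℝ) < i by linarith)
    positivity
  · exact ⟨2, Finset.mem_Icc.mpr ⟨le_refl 2, hK⟩⟩

lemma harmonic_eq_S1 {K : ℕ} (hK : 2 ≤ K) : ((harmonic K : ℚ) : ℝ) = 1 + llS1 K := by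
  rw [harmonic_eq_sum_Icc]
  push_cast
  rw [← Finset.sum_erase_add (Finset.Icc 1 K) _ (Finset.mem_Icc.mpr ⟨le_refl 1, by omega⟩)]
  rw [show (Finset.Icc 1 K).erase 1 = Finset.Icc 2 K by
    ext x; simp only [Finset.mem_erase, Finset.mem_Icc]; omega]
  unfold llS1; push_cast; ring

lemma llS1_le {K : ℕ} (hK : 2 ≤ K) : llS1 K ≤ Real.log K := by
  have h := harmonic_le_one_add_log K
  linarith [(harmonic_eq_S1 hK) ▸ h]

lemma le_llS1 {K : ℕ} (hK : 2 ≤ K) : Real.log K - 1 ≤ llS1 K := by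
  have h := log_add_one_le_harmonic K
  have hmono : Real.log K ≤ Real.log (((K+1:ℕ)):ℝ) := by
    apply Real.log_le_log (by positivity)
    push_cast; linarith
  linarith [(harmonic_eq_S1 hK) ▸ h]

lemma llS2_le {K : ℕ} (hK : 2 ≤ K) : llS2 K ≤ Real.log (Real.log K) * loglogC K := by
  unfold llS2 loglogC
  rw [Finset.mul_sum]
  apply Finset.sum_le_sum
  intro i hi
  have hi2 : (2:ℝ) ≤ (i:ℝ) := by exact_mod_cast (Finset.mem_Icc.mp hi).1
  have hiK : (i:ℝ) ≤ (K:ℝ) := by exact_mod_cast (Finset.mem_Icc.mp hi).2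
  have hli : 0 < Real.log (i:ℝ) := Real.log_pos (by linarith)
  have hf : (0:ℝ) ≤ ((i : ℝ) * Real.log (i : ℝ))⁻¹ := by positivity
  rw [mul_comm (Real.log (Real.log (K:ℝ)))]
  apply mul_le_mul_of_nonneg_left _ hf
  exact Real.log_le_log hli (Real.log_le_log (by linarith) hiK)

lemma le_llS2 {K : ℕ} (hK : 2 ≤ K) : Real.log (Real.log 2) * loglogC K ≤ llS2 K := by
  unfold llS2 loglogC
  rw [Finset.mul_sum]
  apply Finset.sum_le_sum
  intro i hi
  have hi2 : (2:ℝ) ≤ (i:ℝ) := by exact_mod_cast (Finset.mem_Icc.mp hi).1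
  have hl2 : 0 < Real.log (2:ℝ) := Real.log_pos (by norm_num)
  have hf : (0:ℝ) ≤ ((i : ℝ) * Real.log (i : ℝ))⁻¹ := by
    have := Real.log_pos (show (1:ℝ) < i by linarith)
    positivity
  rw [mul_comm (Real.log (Real.log (2:ℝ)))]
  apply mul_le_mul_of_nonneg_left _ hf
  exact Real.log_le_log hl2 (Real.log_le_log (by norm_num) hi2)

lemma entropy_eq {K : ℕ} (hK : 2 ≤ K) :
    loglogEntropy K = Real.log (loglogC K) + (loglogC K)⁻¹ * llS1 K + (loglogC K)⁻¹ * llS2 K := by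
  have hc := loglogC_pos hK
  unfold loglogEntropy
  have hterm : ∀ i ∈ Finset.Icc 2 K,
      loglogP K i * Real.log (loglogP K i)
      = -(Real.log (loglogC K) * ((loglogC K)⁻¹ * ((i : ℝ) * Real.log (i : ℝ))⁻¹)
          + (loglogC K)⁻¹ * (i:ℝ)⁻¹
          + (loglogC K)⁻¹ * (((i : ℝ) * Real.log (i : ℝ))⁻¹ * Real.log (Real.log (i : ℝ)))) := by
    intro i hi
    have hi2 : (2:ℝ) ≤ (i:ℝ) := by exact_mod_cast (Finset.mem_Icc.mp hi).1
    have hli : 0 < Real.log (i:ℝ) := Real.log_pos (by linarith)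
    have hipos : (0:ℝ) < i := by linarith
    unfold loglogP
    rw [Real.log_inv, Real.log_mul (by positivity) hli.ne', Real.log_mul hc.ne' hipos.ne']
    field_simp
  rw [Finset.sum_congr rfl hterm]
  simp only [Finset.sum_neg_distrib, neg_neg, Finset.sum_add_distrib, ← Finset.mul_sum]
  rw [show ∑ i ∈ Finset.Icc 2 K, ((i : ℝ) * Real.log (i : ℝ))⁻¹ = loglogC K from rfl,
    inv_mul_cancel₀ hc.ne', mul_one]
  rfl

lemma tendsto_pow_log_div {n : ℕ} :
    Tendsto (fun u : ℝ => Real.log u ^ n / u) atTop (nhds 0) := by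
  have := Real.tendsto_pow_log_div_mul_add_atTop 1 0 n one_ne_zero
  simpa using this

/-- For the distribution `p_K(i) ∝ 1/(i ln i)`, `H_K ∼ (ln K)/(ln ln K)` as `K → ∞`. -/
theorem loglog_entropy_asymptotics :
    Tendsto (fun K : ℕ =>
        loglogEntropy K * Real.log (Real.log (K : ℝ)) / Real.log (K : ℝ))
      atTop (nhds 1) := by
  set a : ℝ := Real.log (Real.log 2) with ha
  set b : ℝ := (2 * Real.log 2)⁻¹ - a with hb
  set L : ℕ → ℝ := fun K => Real.log (Real.log (K:ℝ)) with hL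
  set c : ℕ → ℝ := fun K => loglogC K with hc
  have hlogtop : Tendsto (fun K : ℕ => Real.log (K:ℝ)) atTop atTop :=
    Real.tendsto_log_atTop.comp tendsto_natCast_atTop_atTop
  have hLtop : Tendsto L atTop atTop := Real.tendsto_log_atTop.comp hlogtop
  have hlog1 : Tendsto (fun K : ℕ => L K / Real.log (K:ℝ)) atTop (nhds 0) := by
    have := (tendsto_pow_log_div (n := 1)).comp hlogtop
    simpa [Function.comp_def] using this
  have hlog2 : Tendsto (fun K : ℕ => (L K)^2 / Real.log (K:ℝ)) atTop (nhds 0) := by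
    have := (tendsto_pow_log_div (n := 2)).comp hlogtop
    simpa [Function.comp_def] using this
  -- eventual basic positivity
  have hev : ∀ᶠ K : ℕ in atTop, 2 ≤ K ∧ 1 ≤ Real.log (K:ℝ) ∧ 1 ≤ L K ∧ 1 + a ≤ L K := by
    filter_upwards [eventually_ge_atTop 2, hlogtop.eventually_ge_atTop 1,
      hLtop.eventually_ge_atTop 1, hLtop.eventually_ge_atTop (1 + a)] with K h1 h2 h3 h4
    exact ⟨h1, h2, h3, h4⟩
  -- c K / L K → 1
  have limcL : Tendsto (fun K => c K / L K) atTop (nhds 1) := by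
    have hlo : Tendsto (fun K => 1 - a / L K) atTop (nhds 1) := by
      have : Tendsto (fun K => a / L K) atTop (nhds 0) := by
        simpa [div_eq_mul_inv] using hLtop.inv_tendsto_atTop.const_mul a
      simpa using tendsto_const_nhds.sub this
    have hhi : Tendsto (fun K => 1 + b / L K) atTop (nhds 1) := by
      have : Tendsto (fun K => b / L K) atTop (nhds 0) := by
        simpa [div_eq_mul_inv] using hLtop.inv_tendsto_atTop.const_mul b
      simpa using tendsto_const_nhds.add this
    apply tendsto_of_tendsto_of_tendsto_of_le_of_le' hlo hhi
    · filter_upwards [hev] with K ⟨h1, h2, h3, h4⟩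
      have hLpos : (0:ℝ) < L K := by linarith
      rw [show (1 : ℝ) - a / L K = (L K - a) / L K from by field_simp]
      apply (div_le_div_iff_of_pos_right hLpos).mpr
      have := loglogC_lower h1
      simp only [hc, hL]
      linarith [this]
    · filter_upwards [hev] with K ⟨h1, h2, h3, h4⟩
      have hLpos : (0:ℝ) < L K := by linarith
      rw [show (1 : ℝ) + b / L K = (L K + b) / L K from by field_simp]
      apply (div_le_div_iff_of_pos_right hLpos).mpr
      have := loglogC_upper h1
      simp only [hc, hb, hL]
      linarith [this]
  -- L K / c K → 1
  have limLc : Tendsto (fun K => L K / c K) atTop (nhds 1) := by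
    have := limcL.inv₀ one_ne_zero
    simpa [inv_div] using this
  -- llS1 / log K → 1
  have lim1 : Tendsto (fun K : ℕ => llS1 K / Real.log (K:ℝ)) atTop (nhds 1) := by
    have hlo : Tendsto (fun K : ℕ => 1 - (Real.log (K:ℝ))⁻¹) atTop (nhds 1) := by
      simpa using tendsto_const_nhds.sub hlogtop.inv_tendsto_atTop
    apply tendsto_of_tendsto_of_tendsto_of_le_of_le' hlo tendsto_const_nhds
    · filter_upwards [hev] with K ⟨h1, h2, h3, h4⟩
      have hpos : (0:ℝ) < Real.log (K:ℝ) := by linarith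
      rw [show (1 : ℝ) - (Real.log (K:ℝ))⁻¹ = (Real.log (K:ℝ) - 1) / Real.log (K:ℝ) from by field_simp]
      exact (div_le_div_iff_of_pos_right hpos).mpr (le_llS1 h1)
    · filter_upwards [hev] with K ⟨h1, h2, h3, h4⟩
      have hpos : (0:ℝ) < Real.log (K:ℝ) := by linarith
      exact (div_le_one hpos).mpr (llS1_le h1)
  -- log c * L / log K → 0
  have lim3 : Tendsto (fun K : ℕ => Real.log (c K) * L K / Real.log (K:ℝ)) atTop (nhds 0) := by
    have hhi : Tendsto (fun K : ℕ => (L K + b) * L K / Real.log (K:ℝ)) atTop (nhds 0) := by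
      have heq : (fun K : ℕ => (L K + b) * L K / Real.log (K:ℝ))
          = fun K : ℕ => (L K)^2 / Real.log (K:ℝ) + b * (L K / Real.log (K:ℝ)) :=
        funext fun K => by ring
      rw [heq]
      simpa using hlog2.add (hlog1.const_mul b)
    apply tendsto_of_tendsto_of_tendsto_of_le_of_le' tendsto_const_nhds hhi
    · filter_upwards [hev] with K ⟨h1, h2, h3, h4⟩
      have hc1 : (1:ℝ) ≤ c K := by
        have := loglogC_lower h1
        simp only [hc, hL] at *
        linarith
      have : (0:ℝ) ≤ Real.log (c K) := Real.log_nonneg hc1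
      positivity
    · filter_upwards [hev] with K ⟨h1, h2, h3, h4⟩
      have hpos : (0:ℝ) < Real.log (K:ℝ) := by linarith
      have hcpos : (0:ℝ) < c K := loglogC_pos h1
      have hup : Real.log (c K) ≤ L K + b := by
        have h5 := Real.log_le_sub_one_of_pos hcpos
        have h6 := loglogC_upper h1
        simp only [hc, hb, hL] at *
        linarith
      apply (div_le_div_iff_of_pos_right hpos).mpr
      exact mul_le_mul_of_nonneg_right hup (by linarith)
  -- (llS2/c) * (L/log K) → 0
  have lim4 : Tendsto (fun K : ℕ => (llS2 K / c K) * (L K / Real.log (K:ℝ))) atTop (nhds 0) := by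
    have hlo : Tendsto (fun K : ℕ => a * (L K / Real.log (K:ℝ))) atTop (nhds 0) := by
      simpa using hlog1.const_mul a
    have hhi : Tendsto (fun K : ℕ => L K * (L K / Real.log (K:ℝ))) atTop (nhds 0) :=
      hlog2.congr fun K => by ring
    apply tendsto_of_tendsto_of_tendsto_of_le_of_le' hlo hhi
    · filter_upwards [hev] with K ⟨h1, h2, h3, h4⟩
      have hcpos : (0:ℝ) < c K := loglogC_pos h1
      have hq : (0:ℝ) ≤ L K / Real.log (K:ℝ) := by
        apply div_nonneg <;> linarith
      exact mul_le_mul_of_nonneg_right ((le_div_iff₀ hcpos).mpr (le_llS2 h1)) hq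
    · filter_upwards [hev] with K ⟨h1, h2, h3, h4⟩
      have hcpos : (0:ℝ) < c K := loglogC_pos h1
      have hq : (0:ℝ) ≤ L K / Real.log (K:ℝ) := by
        apply div_nonneg <;> linarith
      exact mul_le_mul_of_nonneg_right ((div_le_iff₀ hcpos).mpr (llS2_le h1)) hq
  have main := (lim3.add (lim1.mul limLc)).add lim4
  norm_num at main
  apply main.congr'
  filter_upwards [eventually_ge_atTop 2] with K hK
  rw [entropy_eq hK]
  simp only [hc, hL]
  ring
end
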